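/- Fix a positive integer ρ and set α_n = β_{(n,ρn)} for n ≥ 1. Then the limit α = lim_{n→∞} α_n^{1/n} exists and satisfies 1 ≤ α ≤ 4^{1+ρ}. -/

import Mathlib

open MeasureTheory Filter

/-- An edge of the square lattice `ℤ × ℤ`, encoded by its lower-left endpoint `base`
together with its direction: a horizontal edge joins `base` to `base + (1,0)`,
a vertical edge joins `base` to `base + (0,1)`. This encodes exactly the set
`𝔼` of nearest-neighbour edges of `ℤ²`. -/
structure LatticeEdge where
  base : ℤ × ℤ
  horiz : Bool
deriving DecidableEq

namespace LatticeEdge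

/-- First endpoint of an edge. -/
def fst (e : LatticeEdge) : ℤ × ℤ := e.base

/-- Second endpoint of an edge. -/
def snd (e : LatticeEdge) : ℤ × ℤ :=
  if e.horiz then (e.base.1 + 1, e.base.2) else (e.base.1, e.base.2 + 1)

/-- The two endpoints of an edge, as an unordered pair. -/
def ends (e : LatticeEdge) : Sym2 (ℤ × ℤ) := s(e.fst, e.snd)

end LatticeEdge

/-- The graph on `ℤ²` whose edges are the lattice edges belonging to `S`. -/
def graphOf (S : Set LatticeEdge) : SimpleGraph (ℤ × ℤ) where
  Adj u v := u ≠ v ∧ ∃ e ∈ S, e.ends = s(u, v)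
  symm := by
    constructor
    intro u v h
    obtain ⟨hne, e, he, hs⟩ := h
    exact ⟨hne.symm, e, he, hs.trans (Sym2.eq_swap)⟩
  loopless := by
    constructor
    intro u h
    exact h.1 rfl

/-- The graph `(ℤ², 𝔼 ∖ γ)` obtained by deleting the edges of `γ`. -/
def complGraph (γ : Finset LatticeEdge) : SimpleGraph (ℤ × ℤ) :=
  graphOf {e | e ∉ γ}

/-- A finite set `γ` of lattice edges is a *contour* if the graph `(ℤ², 𝔼 ∖ γ)` has
exactly one finite connected component, and `γ` is minimal with this property:
for every `e ∈ γ`, the graph `(ℤ², 𝔼 ∖ (γ ∖ {e}))` has no finite connected component. -/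
def IsContour (γ : Finset LatticeEdge) : Prop :=
  (∃! C : (complGraph γ).ConnectedComponent, C.supp.Finite) ∧
  ∀ e ∈ γ, ∀ C : (graphOf {f | f ∉ γ ∨ f = e}).ConnectedComponent, ¬ C.supp.Finite

/-- A contour `γ` *surrounds* a set `X ⊆ ℤ²` of vertices if `X` is contained in the
vertex set `I_γ` of the (unique) finite connected component of `(ℤ², 𝔼 ∖ γ)`. -/
def Surrounds (γ : Finset LatticeEdge) (X : Set (ℤ × ℤ)) : Prop :=
  IsContour γ ∧ ∃ C : (complGraph γ).ConnectedComponent, C.supp.Finite ∧ X ⊆ C.supp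

/-- `Γ^n_X` : the set of contours of cardinality `n` surrounding `X`. -/
def GammaN (X : Set (ℤ × ℤ)) (n : ℕ) : Set (Finset LatticeEdge) :=
  {γ | Surrounds γ X ∧ γ.card = n}

/-- `‖x‖ = 2(x₁ + x₂ + 2)`, the cardinality of a minimal contour surrounding `{0, x}`. -/
def normC (x : ℤ × ℤ) : ℕ := (2 * (x.1 + x.2 + 2)).toNat

/-- `β_x` : the number of minimal contours surrounding `{0, x}`. -/
noncomputable def betaX (x : ℤ × ℤ) : ℕ := Nat.card ↥(GammaN {0, x} (normC x))

/-- Number of horizontal edges of `γ`, i.e. `|γ ∩ 𝔼ʰ|`. -/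
def hCount (γ : Finset LatticeEdge) : ℕ := (γ.filter fun e => e.horiz = true).card

/-- Number of vertical edges of `γ`, i.e. `|γ ∩ 𝔼ᵛ|`. -/
def vCount (γ : Finset LatticeEdge) : ℕ := (γ.filter fun e => e.horiz = false).card

/-- The dual edge `e*` of a lattice edge `e`.  We identify the dual lattice
`ℤ² + (1/2, 1/2)` with `ℤ²` via `(a,b) ↦ (a + 1/2, b + 1/2)`; under this
identification the dual edge crossing the horizontal edge `(a,b)–(a+1,b)` joins
`(a, b-1)` to `(a, b)` (a vertical dual edge), and the dual edge crossing the
vertical edge `(a,b)–(a,b+1)` joins `(a-1, b)` to `(a, b)` (a horizontal dual edge). -/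
def dualEdge (e : LatticeEdge) : LatticeEdge :=
  if e.horiz then ⟨(e.base.1, e.base.2 - 1), false⟩ else ⟨(e.base.1 - 1, e.base.2), true⟩

/-- A finite set `S` of (dual) lattice edges is a *circuit* if it is the edge set of a
closed self-avoiding path: there are `n ≥ 3` distinct vertices `c 0, …, c (n-1)`,
cyclically consecutive ones being joined by an edge of `S`, and every edge of `S` arising
this way. -/
def IsCircuit (S : Finset LatticeEdge) : Prop :=
  ∃ n : ℕ, 3 ≤ n ∧ ∃ c : ZMod n → ℤ × ℤ, Function.Injective c ∧
    (∀ i : ZMod n, ∃ e ∈ S, e.ends = s(c i, c (i + 1))) ∧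
    (∀ e ∈ S, ∃ i : ZMod n, e.ends = s(c i, c (i + 1)))

/-- The dual edge `e_k*` joining `(k - 1/2, -1/2)` to `(k - 1/2, 1/2)`; in our
identification of the dual lattice with `ℤ²` this is the vertical dual edge with base
`(k-1, -1)`, i.e. the dual of the horizontal edge `(k-1, 0)–(k, 0)`. -/
def ekStar (k : ℤ) : LatticeEdge := ⟨(k - 1, -1), false⟩

/-- The probability that the edge `e` is open: `p_h` for horizontal edges and `p_v`
for vertical ones. -/
noncomputable def edgeProb (ph pv : ℝ) (e : LatticeEdge) : ℝ := if e.horiz then ph else pv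

/-- `P` is the Bernoulli product measure `P_{(p_h, p_v)}` on configurations
`ω ∈ {0,1}^𝔼` (encoded as `LatticeEdge → Bool`, `true` = open): it is a probability
measure and, for every finite set of edges, the states of those edges are independent
Bernoulli variables with the correct parameters.  These cylinder probabilities
characterize the product measure uniquely. -/
def IsBernoulliProduct (ph pv : ℝ) (P : Measure (LatticeEdge → Bool)) : Prop :=
  IsProbabilityMeasure P ∧
    ∀ (F : Finset LatticeEdge) (σ : LatticeEdge → Bool),
      P {ω | ∀ e ∈ F, ω e = σ e} =
        ∏ e ∈ F, ENNReal.ofReal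
          (if σ e then edgeProb ph pv e else 1 - edgeProb ph pv e)

/-- The graph of open edges of the configuration `ω`. -/
def openGraph (ω : LatticeEdge → Bool) : SimpleGraph (ℤ × ℤ) :=
  graphOf {e | ω e = true}

/-- `x` and `y` belong to the same finite open cluster of the configuration `ω`. -/
def SameFiniteCluster (ω : LatticeEdge → Bool) (x y : ℤ × ℤ) : Prop :=
  ∃ C : (openGraph ω).ConnectedComponent, x ∈ C.supp ∧ y ∈ C.supp ∧ C.supp.Finite

/-- The truncated (finite) connectivity `τ^f_p(x,y)`: the probability that `x` and `y`
belong to the same finite open cluster. -/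
noncomputable def tauF (P : Measure (LatticeEdge → Bool)) (x y : ℤ × ℤ) : ℝ :=
  (P {ω | SameFiniteCluster ω x y}).toReal

/-- The box `V_N = ([-N,N] × [-N,N]) ∩ ℤ²`. -/
def VN (N : ℕ) : Set (ℤ × ℤ) := {v | |v.1| ≤ (N : ℤ) ∧ |v.2| ≤ (N : ℤ)}

/-- The interior vertex boundary `∂_v^int V_N = {x ∈ V_N : d(x, ℤ² ∖ V_N) = 1}`. -/
def intBdry (N : ℕ) : Set (ℤ × ℤ) :=
  {v | (|v.1| ≤ (N : ℤ) ∧ |v.2| ≤ (N : ℤ)) ∧ (|v.1| = (N : ℤ) ∨ |v.2| = (N : ℤ))}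

/-- `e ∈ E_N`: both endpoints of `e` lie in `V_N`. -/
def edgeInBox (N : ℕ) (e : LatticeEdge) : Prop := e.fst ∈ VN N ∧ e.snd ∈ VN N

/-- The graph on `(V_N, open edges of E_N)` (vertices outside `V_N` are isolated). -/
def openGraphN (N : ℕ) (ω : LatticeEdge → Bool) : SimpleGraph (ℤ × ℤ) :=
  graphOf {e | edgeInBox N e ∧ ω e = true}

/-- The finite-volume event defining `τ^{f,N}_p(x,y)`: there is an open cluster `A` of
`(V_N, open edges of E_N)` with `{x,y} ⊆ V_A` and `V_A ∩ ∂_v^int V_N = ∅`. -/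
def FiniteVolEvent (N : ℕ) (x y : ℤ × ℤ) (ω : LatticeEdge → Bool) : Prop :=
  ∃ C : (openGraphN N ω).ConnectedComponent,
    x ∈ C.supp ∧ y ∈ C.supp ∧ C.supp ∩ intBdry N = ∅

/-- The finite-volume finite connectivity `τ^{f,N}_p(x,y)`. -/
noncomputable def tauFN (P : Measure (LatticeEdge → Bool)) (N : ℕ) (x y : ℤ × ℤ) : ℝ :=
  (P {ω | FiniteVolEvent N x y ω}).toReal

/-- `λ = (1-p)/p`. -/
noncomputable def lam (p : ℝ) : ℝ := (1 - p) / p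

/-- The threshold `η̃(p_h, x₁, x₂)` from the paper. -/
noncomputable def etaTilde (ph : ℝ) (x1 x2 : ℤ) : ℝ :=
  ((betaX (x1, x2) : ℝ) * ph ^ (4 * (x1 + x2 + 2)) /
      ((4 ^ 3 * lam ph) ^ (x1 + x2 + 3) / (1 - 4 ^ 3 * lam ph) +
        (betaX (x1, x2) : ℝ) * (1 + 12 * lam ph) ^ (2 * (x1 + x2 + 2)))) ^
    (1 / (2 * ((x2 : ℝ) - (x1 : ℝ))))

/-! ### Auxiliary development -/

namespace BetaAux

open SimpleGraph

/-- horizontal edge from `(a,r)` to `(a+1,r)` -/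
def rowE (a r : ℤ) : LatticeEdge := ⟨(a, r), true⟩
/-- vertical edge from `(a,r)` to `(a,r+1)` -/
def colE (a r : ℤ) : LatticeEdge := ⟨(a, r), false⟩

lemma rowE_fst (a r : ℤ) : (rowE a r).fst = (a, r) := rfl
lemma rowE_snd (a r : ℤ) : (rowE a r).snd = (a + 1, r) := rfl
lemma colE_fst (a r : ℤ) : (colE a r).fst = (a, r) := rfl
lemma colE_snd (a r : ℤ) : (colE a r).snd = (a, r + 1) := rfl

lemma edge_cases (e : LatticeEdge) : (∃ a r, e = rowE a r) ∨ (∃ a r, e = colE a r) := by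
  obtain ⟨⟨a, r⟩, h⟩ := e
  cases h
  · right; exact ⟨a, r, rfl⟩
  · left; exact ⟨a, r, rfl⟩

lemma graphOf_adj {S : Set LatticeEdge} {u v : ℤ × ℤ} :
    (graphOf S).Adj u v ↔
      (rowE u.1 u.2 ∈ S ∧ v = (u.1 + 1, u.2)) ∨ (rowE v.1 v.2 ∈ S ∧ u = (v.1 + 1, v.2)) ∨
      (colE u.1 u.2 ∈ S ∧ v = (u.1, u.2 + 1)) ∨ (colE v.1 v.2 ∈ S ∧ u = (v.1, v.2 + 1)) := by
  constructor
  · rintro ⟨hne, e, heS, hends⟩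
    rcases edge_cases e with ⟨a, r, rfl⟩ | ⟨a, r, rfl⟩ <;>
      rw [LatticeEdge.ends, Sym2.eq_iff] at hends
    · rcases hends with ⟨h1, h2⟩ | ⟨h1, h2⟩
      · rw [rowE_fst] at h1; subst h1
        exact Or.inl ⟨heS, h2.symm⟩
      · rw [rowE_fst] at h1; subst h1
        exact Or.inr (Or.inl ⟨heS, h2.symm⟩)
    · rcases hends with ⟨h1, h2⟩ | ⟨h1, h2⟩
      · rw [colE_fst] at h1; subst h1
        exact Or.inr (Or.inr (Or.inl ⟨heS, h2.symm⟩))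
      · rw [colE_fst] at h1; subst h1
        exact Or.inr (Or.inr (Or.inr ⟨heS, h2.symm⟩))
  · intro h
    rcases h with ⟨hS, hv⟩ | ⟨hS, hv⟩ | ⟨hS, hv⟩ | ⟨hS, hv⟩
    · refine ⟨?_, rowE u.1 u.2, hS, ?_⟩
      · intro huv; rw [← huv] at hv
        have := congrArg Prod.fst hv; simp at this
      · rw [hv, LatticeEdge.ends, rowE_fst, rowE_snd]
    · refine ⟨?_, rowE v.1 v.2, hS, ?_⟩
      · intro huv; rw [huv] at hv
        have := congrArg Prod.fst hv; simp at this
      · rw [hv, LatticeEdge.ends, rowE_fst, rowE_snd, Sym2.eq_swap]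
    · refine ⟨?_, colE u.1 u.2, hS, ?_⟩
      · intro huv; rw [← huv] at hv
        have := congrArg Prod.snd hv; simp at this
      · rw [hv, LatticeEdge.ends, colE_fst, colE_snd]
    · refine ⟨?_, colE v.1 v.2, hS, ?_⟩
      · intro huv; rw [huv] at hv
        have := congrArg Prod.snd hv; simp at this
      · rw [hv, LatticeEdge.ends, colE_fst, colE_snd, Sym2.eq_swap]

lemma adj_row {S : Set LatticeEdge} {a r : ℤ} (h : rowE a r ∈ S) :
    (graphOf S).Adj (a, r) (a + 1, r) :=
  graphOf_adj.2 (Or.inl ⟨h, rfl⟩)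

lemma adj_col {S : Set LatticeEdge} {a r : ℤ} (h : colE a r ∈ S) :
    (graphOf S).Adj (a, r) (a, r + 1) :=
  graphOf_adj.2 (Or.inr (Or.inr (Or.inl ⟨h, rfl⟩)))

/-- coordinates change by at most one along an edge -/
lemma adj_coord {S : Set LatticeEdge} {u v : ℤ × ℤ} (h : (graphOf S).Adj u v) :
    (v = (u.1 + 1, u.2)) ∨ (v = (u.1 - 1, u.2)) ∨ (v = (u.1, u.2 + 1)) ∨ (v = (u.1, u.2 - 1)) := by
  rcases graphOf_adj.1 h with ⟨_, hv⟩ | ⟨_, hv⟩ | ⟨_, hv⟩ | ⟨_, hv⟩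
  · exact Or.inl hv
  · right; left
    have h1 := congrArg Prod.fst hv; have h2 := congrArg Prod.snd hv
    simp at h1 h2; ext <;> simp <;> omega
  · right; right; left; exact hv
  · right; right; right
    have h1 := congrArg Prod.fst hv; have h2 := congrArg Prod.snd hv
    simp at h1 h2; ext <;> simp <;> omega

end BetaAux

namespace BetaAux

open SimpleGraph

/-- `e` is a boundary edge of the vertex set `S`. -/
def Bdry (S : Set (ℤ × ℤ)) (e : LatticeEdge) : Prop :=
  (e.fst ∈ S ∧ e.snd ∉ S) ∨ (e.fst ∉ S ∧ e.snd ∈ S)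

/-- `γ` is exactly the edge boundary of `S`. -/
def IsBd (γ : Finset LatticeEdge) (S : Set (ℤ × ℤ)) : Prop := ∀ e, e ∈ γ ↔ Bdry S e

lemma bdry_rowE {S : Set (ℤ × ℤ)} {a r : ℤ} :
    Bdry S (rowE a r) ↔ ((a, r) ∈ S ∧ (a + 1, r) ∉ S) ∨ ((a, r) ∉ S ∧ (a + 1, r) ∈ S) :=
  Iff.rfl

lemma bdry_colE {S : Set (ℤ × ℤ)} {a r : ℤ} :
    Bdry S (colE a r) ↔ ((a, r) ∈ S ∧ (a, r + 1) ∉ S) ∨ ((a, r) ∉ S ∧ (a, r + 1) ∈ S) :=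
  Iff.rfl

section BdLemmas

variable {γ : Finset LatticeEdge} {S : Set (ℤ × ℤ)} (hγ : IsBd γ S)

include hγ

lemma not_mem_of_not_bdry {e : LatticeEdge} (h : ¬ Bdry S e) :
    e ∈ ({f | f ∉ γ} : Set LatticeEdge) := fun hc => h ((hγ e).1 hc)

lemma adj_row_in {a r : ℤ} (h1 : (a, r) ∈ S) (h2 : (a + 1, r) ∈ S) :
    (complGraph γ).Adj (a, r) (a + 1, r) :=
  adj_row (not_mem_of_not_bdry hγ (by rw [bdry_rowE]; tauto))

lemma adj_row_out {a r : ℤ} (h1 : (a, r) ∉ S) (h2 : (a + 1, r) ∉ S) :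
    (complGraph γ).Adj (a, r) (a + 1, r) :=
  adj_row (not_mem_of_not_bdry hγ (by rw [bdry_rowE]; tauto))

lemma adj_col_in {a r : ℤ} (h1 : (a, r) ∈ S) (h2 : (a, r + 1) ∈ S) :
    (complGraph γ).Adj (a, r) (a, r + 1) :=
  adj_col (not_mem_of_not_bdry hγ (by rw [bdry_colE]; tauto))

lemma adj_col_out {a r : ℤ} (h1 : (a, r) ∉ S) (h2 : (a, r + 1) ∉ S) :
    (complGraph γ).Adj (a, r) (a, r + 1) :=
  adj_col (not_mem_of_not_bdry hγ (by rw [bdry_colE]; tauto))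

end BdLemmas

lemma reach_seg_up {G : SimpleGraph (ℤ × ℤ)} {i r s : ℤ} (hrs : r ≤ s) :
    (∀ y, r ≤ y → y < s → G.Adj (i, y) (i, y + 1)) → G.Reachable (i, r) (i, s) := by
  refine Int.le_induction (motive := fun s _ =>
    (∀ y, r ≤ y → y < s → G.Adj (i, y) (i, y + 1)) → G.Reachable (i, r) (i, s)) ?_ ?_ s hrs
  · intro _; exact Reachable.refl _
  · intro s hs ih h
    exact (ih fun y hy hy2 => h y hy (by omega)).trans (h s hs (by omega)).reachable

lemma reach_seg_right {G : SimpleGraph (ℤ × ℤ)} {r i j : ℤ} (hij : i ≤ j) :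
    (∀ a, i ≤ a → a < j → G.Adj (a, r) (a + 1, r)) → G.Reachable (i, r) (j, r) := by
  refine Int.le_induction (motive := fun j _ =>
    (∀ a, i ≤ a → a < j → G.Adj (a, r) (a + 1, r)) → G.Reachable (i, r) (j, r)) ?_ ?_ j hij
  · intro _; exact Reachable.refl _
  · intro j hj ih h
    exact (ih fun a ha ha2 => h a ha (by omega)).trans (h j hj (by omega)).reachable

lemma walk_mem_closed {G : SimpleGraph (ℤ × ℤ)} {S : Set (ℤ × ℤ)}
    (hcl : ∀ ⦃u w⦄, u ∈ S → G.Adj u w → w ∈ S) :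
    ∀ {v u : ℤ × ℤ}, G.Walk v u → v ∈ S → u ∈ S := by
  intro v u p
  induction p with
  | nil => exact id
  | cons h q ih => exact fun hv => ih (hcl hv h)

lemma supp_mk_eq {G : SimpleGraph (ℤ × ℤ)} {S : Set (ℤ × ℤ)} {v : ℤ × ℤ} (hv : v ∈ S)
    (hreach : ∀ u ∈ S, G.Reachable v u)
    (hcl : ∀ ⦃u w⦄, u ∈ S → G.Adj u w → w ∈ S) :
    (G.connectedComponentMk v).supp = S := by
  ext u
  rw [ConnectedComponent.mem_supp_iff, ConnectedComponent.eq]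
  constructor
  · intro h
    obtain ⟨p⟩ := h.symm
    exact walk_mem_closed hcl p hv
  · exact fun hu => (hreach u hu).symm

lemma mem_supp_of_adj {G : SimpleGraph (ℤ × ℤ)} {C : G.ConnectedComponent} {u w : ℤ × ℤ}
    (hu : u ∈ C.supp) (h : G.Adj u w) : w ∈ C.supp := by
  rw [ConnectedComponent.mem_supp_iff] at hu ⊢
  rw [← hu]
  exact ConnectedComponent.eq.2 h.symm.reachable

lemma reachable_of_mem_supp {G : SimpleGraph (ℤ × ℤ)} {C : G.ConnectedComponent} {u w : ℤ × ℤ}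
    (hu : u ∈ C.supp) (hw : w ∈ C.supp) : G.Reachable u w := by
  rw [ConnectedComponent.mem_supp_iff] at hu hw
  exact ConnectedComponent.eq.1 (hu.trans hw.symm)

lemma walk_supp_subset {G : SimpleGraph (ℤ × ℤ)} {C : G.ConnectedComponent} {u v : ℤ × ℤ}
    (p : G.Walk u v) (hu : u ∈ C.supp) : ∀ w ∈ p.support, w ∈ C.supp := by
  induction p with
  | nil => intro w hw; rw [SimpleGraph.Walk.mem_support_nil_iff] at hw; rwa [hw]
  | cons h q ih =>
    intro w hw
    rw [SimpleGraph.Walk.support_cons, List.mem_cons] at hw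
    rcases hw with rfl | hw
    · exact hu
    · exact ih (mem_supp_of_adj hu h) w hw

lemma walk_ivt {G : SimpleGraph (ℤ × ℤ)} (f : ℤ × ℤ → ℤ)
    (hf : ∀ ⦃u v⦄, G.Adj u v → f v ≤ f u + 1) {u v : ℤ × ℤ} (p : G.Walk u v)
    {i : ℤ} (h1 : f u ≤ i) (h2 : i ≤ f v) : ∃ w ∈ p.support, f w = i := by
  induction p with
  | nil =>
    rename_i w
    exact ⟨w, by simp, by omega⟩
  | @cons a b c h q ih =>
    by_cases hb : f a = i
    · exact ⟨a, by simp, hb⟩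
    · have hfb : f b ≤ i := by have := hf h; omega
      obtain ⟨w, hw, hfw⟩ := ih hfb h2
      exact ⟨w, by simp [hw], hfw⟩

lemma adj_fst_le {S : Set LatticeEdge} : ∀ ⦃u v : ℤ × ℤ⦄, (graphOf S).Adj u v → v.1 ≤ u.1 + 1 := by
  intro u v h
  rcases adj_coord h with rfl | rfl | rfl | rfl <;> simp <;> omega

lemma adj_snd_le {S : Set LatticeEdge} : ∀ ⦃u v : ℤ × ℤ⦄, (graphOf S).Adj u v → v.2 ≤ u.2 + 1 := by
  intro u v h
  rcases adj_coord h with rfl | rfl | rfl | rfl <;> simp <;> omega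

/-- a walk crossing the vertical line between columns `i` and `i+1` from left to right
contains a horizontal crossing edge. -/
lemma walk_cross_col {S : Set LatticeEdge} {u v : ℤ × ℤ} (p : (graphOf S).Walk u v) {i : ℤ}
    (h1 : u.1 ≤ i) (h2 : i < v.1) :
    ∃ y, (i, y) ∈ p.support ∧ (i + 1, y) ∈ p.support ∧ (graphOf S).Adj (i, y) (i + 1, y) := by
  induction p with
  | nil => omega
  | @cons a b c h q ih =>
    by_cases hb : b.1 ≤ i
    · obtain ⟨y, hy1, hy2, hy3⟩ := ih hb h2
      exact ⟨y, by simp [hy1], by simp [hy2], hy3⟩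
    · have hb1 : b.1 = a.1 + 1 ∧ b.2 = a.2 := by
        rcases adj_coord h with rfl | rfl | rfl | rfl <;> simp at hb ⊢ <;> omega
      have ha1 : a.1 = i := by omega
      have ha : a = (i, a.2) := by rw [← ha1]
      have hbb : b = (i + 1, a.2) := by
        have : b = (b.1, b.2) := rfl
        rw [this, hb1.1, hb1.2, ha1]
      refine ⟨a.2, ?_, ?_, ?_⟩
      · rw [← ha]; simp
      · rw [← hbb]
        simp [SimpleGraph.Walk.support_cons]
      · rw [← ha, ← hbb]; exact h

end BetaAux

namespace BetaAux

open SimpleGraph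

open scoped Classical in
/-- The edges of the box `[-1,n] × [-1,m]` (as bases). -/
noncomputable def boxEdges (n m : ℤ) : Finset LatticeEdge :=
  ((Finset.Icc (-1) n ×ˢ Finset.Icc (-1) m).image fun p => rowE p.1 p.2) ∪
  ((Finset.Icc (-1) n ×ˢ Finset.Icc (-1) m).image fun p => colE p.1 p.2)

lemma mem_boxEdges {n m : ℤ} {e : LatticeEdge} :
    e ∈ boxEdges n m ↔ -1 ≤ e.base.1 ∧ e.base.1 ≤ n ∧ -1 ≤ e.base.2 ∧ e.base.2 ≤ m := by
  constructor
  · intro h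
    rcases Finset.mem_union.1 h with h | h <;>
    · obtain ⟨p, hp, rfl⟩ := Finset.mem_image.1 h
      rw [Finset.mem_product] at hp
      simp only [Finset.mem_Icc] at hp
      exact ⟨hp.1.1, hp.1.2, hp.2.1, hp.2.2⟩
  · rintro ⟨h1, h2, h3, h4⟩
    rcases edge_cases e with ⟨a, r, rfl⟩ | ⟨a, r, rfl⟩
    · refine Finset.mem_union_left _ (Finset.mem_image.2 ⟨(a, r), ?_, rfl⟩)
      rw [Finset.mem_product]
      simp only [Finset.mem_Icc]
      exact ⟨⟨h1, h2⟩, h3, h4⟩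
    · refine Finset.mem_union_right _ (Finset.mem_image.2 ⟨(a, r), ?_, rfl⟩)
      rw [Finset.mem_product]
      simp only [Finset.mem_Icc]
      exact ⟨⟨h1, h2⟩, h3, h4⟩

/-- The staircase conditions on the pair of height functions `(b, t)`. -/
structure Cond (n m : ℤ) (b t : ℤ → ℤ) : Prop where
  hn : 1 ≤ n
  hm : 1 ≤ m
  monoB : ∀ ⦃i j⦄, 0 ≤ i → i ≤ j → j ≤ n → b i ≤ b j
  monoT : ∀ ⦃i j⦄, 0 ≤ i → i ≤ j → j ≤ n → t i ≤ t j
  b0 : b 0 = 0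
  tn : t n = m
  hbt : ∀ ⦃i⦄, 0 ≤ i → i ≤ n → b i ≤ t i
  cross : ∀ ⦃i⦄, 0 ≤ i → i < n → b (i + 1) ≤ t i

/-- The staircase polyomino determined by `(b,t)`. -/
def Sbt (n : ℤ) (b t : ℤ → ℤ) : Set (ℤ × ℤ) :=
  {p | 0 ≤ p.1 ∧ p.1 ≤ n ∧ b p.1 ≤ p.2 ∧ p.2 ≤ t p.1}

lemma mem_Sbt {n : ℤ} {b t : ℤ → ℤ} {a r : ℤ} :
    (a, r) ∈ Sbt n b t ↔ 0 ≤ a ∧ a ≤ n ∧ b a ≤ r ∧ r ≤ t a := Iff.rfl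

namespace Cond

variable {n m : ℤ} {b t : ℤ → ℤ} (hc : Cond n m b t)
include hc

lemma b_nonneg {i : ℤ} (h1 : 0 ≤ i) (h2 : i ≤ n) : 0 ≤ b i := by
  have h3 := hc.monoB le_rfl h1 h2
  have h4 := hc.b0
  omega

lemma b_le_m {i : ℤ} (h1 : 0 ≤ i) (h2 : i ≤ n) : b i ≤ m := by
  have h3 := hc.monoB h1 h2 le_rfl
  have h4 := hc.hbt (le_trans h1 h2) le_rfl
  have h5 := hc.tn
  omega

lemma t_nonneg {i : ℤ} (h1 : 0 ≤ i) (h2 : i ≤ n) : 0 ≤ t i := by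
  have h3 := hc.monoT le_rfl h1 h2
  have h4 := hc.hbt le_rfl (le_trans zero_le_one hc.hn)
  have h5 := hc.b0
  omega

lemma t_le_m {i : ℤ} (h1 : 0 ≤ i) (h2 : i ≤ n) : t i ≤ m := by
  have h3 := hc.monoT h1 h2 le_rfl
  have h4 := hc.tn
  omega

lemma sbt_sub_box : Sbt n b t ⊆ {p | 0 ≤ p.1 ∧ p.1 ≤ n ∧ 0 ≤ p.2 ∧ p.2 ≤ m} := by
  rintro ⟨a, r⟩ ⟨h1, h2, h3, h4⟩
  have := hc.b_nonneg h1 h2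
  have := hc.t_le_m h1 h2
  exact ⟨h1, h2, by omega, by omega⟩

end Cond

open scoped Classical in
/-- The boundary of a set of vertices, restricted to the box. -/
noncomputable def bdryF (n m : ℤ) (S : Set (ℤ × ℤ)) : Finset LatticeEdge :=
  (boxEdges n m).filter fun e => Bdry S e

/-- The contour associated to a staircase pair. -/
noncomputable def gbt (n m : ℤ) (b t : ℤ → ℤ) : Finset LatticeEdge :=
  bdryF n m (Sbt n b t)

lemma mem_bdryF {n m : ℤ} {S : Set (ℤ × ℤ)} {e : LatticeEdge} :
    e ∈ bdryF n m S ↔ e ∈ boxEdges n m ∧ Bdry S e := by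
  classical
  simp [bdryF]

lemma isBd_gbt {n m : ℤ} {b t : ℤ → ℤ} (hc : Cond n m b t) :
    IsBd (gbt n m b t) (Sbt n b t) := by
  intro e
  rw [gbt, mem_bdryF]
  constructor
  · exact fun h => h.2
  · intro h
    refine ⟨?_, h⟩
    have hbox := hc.sbt_sub_box
    rw [mem_boxEdges]
    rcases edge_cases e with ⟨a, r, rfl⟩ | ⟨a, r, rfl⟩
    · rcases h with ⟨h1, _⟩ | ⟨_, h1⟩
      · rw [rowE_fst] at h1
        obtain ⟨c1, c2, c3, c4⟩ := hbox h1
        have d1 : 0 ≤ a := c1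
        have d2 : a ≤ n := c2
        have d3 : 0 ≤ r := c3
        have d4 : r ≤ m := c4
        show -1 ≤ a ∧ a ≤ n ∧ -1 ≤ r ∧ r ≤ m
        omega
      · rw [rowE_snd] at h1
        obtain ⟨c1, c2, c3, c4⟩ := hbox h1
        have d1 : 0 ≤ a + 1 := c1
        have d2 : a + 1 ≤ n := c2
        have d3 : 0 ≤ r := c3
        have d4 : r ≤ m := c4
        show -1 ≤ a ∧ a ≤ n ∧ -1 ≤ r ∧ r ≤ m
        omega
    · rcases h with ⟨h1, _⟩ | ⟨_, h1⟩
      · rw [colE_fst] at h1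
        obtain ⟨c1, c2, c3, c4⟩ := hbox h1
        have d1 : 0 ≤ a := c1
        have d2 : a ≤ n := c2
        have d3 : 0 ≤ r := c3
        have d4 : r ≤ m := c4
        show -1 ≤ a ∧ a ≤ n ∧ -1 ≤ r ∧ r ≤ m
        omega
      · rw [colE_snd] at h1
        obtain ⟨c1, c2, c3, c4⟩ := hbox h1
        have d1 : 0 ≤ a := c1
        have d2 : a ≤ n := c2
        have d3 : 0 ≤ r + 1 := c3
        have d4 : r + 1 ≤ m := c4
        show -1 ≤ a ∧ a ≤ n ∧ -1 ≤ r ∧ r ≤ m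
        omega

end BetaAux

namespace BetaAux

open SimpleGraph

open scoped Classical in
/-- right end of row `r` -/
noncomputable def Rr (n : ℤ) (b : ℤ → ℤ) (r : ℤ) : ℤ :=
  if h : ((Finset.Icc 0 n).filter fun i => b i ≤ r).Nonempty
  then ((Finset.Icc 0 n).filter fun i => b i ≤ r).max' h else 0

open scoped Classical in
/-- left end of row `r` -/
noncomputable def Lr (n : ℤ) (t : ℤ → ℤ) (r : ℤ) : ℤ :=
  if h : ((Finset.Icc 0 n).filter fun i => r ≤ t i).Nonempty
  then ((Finset.Icc 0 n).filter fun i => r ≤ t i).min' h else 0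

section RowEnds

variable {n m : ℤ} {b t : ℤ → ℤ} (hc : Cond n m b t) {r : ℤ} (hr0 : 0 ≤ r) (hrm : r ≤ m)

include hc hr0 hrm

lemma Rr_spec : 0 ≤ Rr n b r ∧ Rr n b r ≤ n ∧ b (Rr n b r) ≤ r ∧
    ∀ i, 0 ≤ i → i ≤ n → (b i ≤ r ↔ i ≤ Rr n b r) := by
  classical
  have hne : ((Finset.Icc 0 n).filter fun i => b i ≤ r).Nonempty := by
    refine ⟨0, ?_⟩
    rw [Finset.mem_filter, Finset.mem_Icc, hc.b0]
    exact ⟨⟨le_rfl, le_trans zero_le_one hc.hn⟩, hr0⟩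
  rw [Rr, dif_pos hne]
  have hmem := Finset.max'_mem _ hne
  rw [Finset.mem_filter, Finset.mem_Icc] at hmem
  refine ⟨hmem.1.1, hmem.1.2, hmem.2, ?_⟩
  intro i h0 hn2
  constructor
  · intro hbi
    exact Finset.le_max' _ i (by rw [Finset.mem_filter, Finset.mem_Icc]; exact ⟨⟨h0, hn2⟩, hbi⟩)
  · intro hle
    exact le_trans (hc.monoB h0 hle hmem.1.2) hmem.2

lemma Lr_spec : 0 ≤ Lr n t r ∧ Lr n t r ≤ n ∧ r ≤ t (Lr n t r) ∧
    ∀ i, 0 ≤ i → i ≤ n → (r ≤ t i ↔ Lr n t r ≤ i) := by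
  classical
  have hne : ((Finset.Icc 0 n).filter fun i => r ≤ t i).Nonempty := by
    refine ⟨n, ?_⟩
    rw [Finset.mem_filter, Finset.mem_Icc, hc.tn]
    exact ⟨⟨le_trans zero_le_one hc.hn, le_rfl⟩, hrm⟩
  rw [Lr, dif_pos hne]
  have hmem := Finset.min'_mem _ hne
  rw [Finset.mem_filter, Finset.mem_Icc] at hmem
  refine ⟨hmem.1.1, hmem.1.2, hmem.2, ?_⟩
  intro i h0 hn2
  constructor
  · intro hti
    exact Finset.min'_le _ i (by rw [Finset.mem_filter, Finset.mem_Icc]; exact ⟨⟨h0, hn2⟩, hti⟩)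
  · intro hle
    exact le_trans hmem.2 (hc.monoT hmem.1.1 hle hn2)

lemma Lr_le_Rr : Lr n t r ≤ Rr n b r := by
  obtain ⟨hR0, hRn, hbR, hRiff⟩ := Rr_spec hc hr0 hrm
  obtain ⟨hL0, hLn, htL, hLiff⟩ := Lr_spec hc hr0 hrm
  by_contra hlt
  push_neg at hlt
  -- Rr < Lr; consider i := Rr + 1 ≤ n...
  -- We show b (Lr) ≤ r, hence Lr ≤ Rr, contradiction.
  have hbL : b (Lr n t r) ≤ r := by
    rcases eq_or_lt_of_le hL0 with h0 | hpos
    · rw [← h0, hc.b0]; exact hr0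
    · have h1 : ¬ (r ≤ t (Lr n t r - 1)) := by
        intro hcon
        have := (hLiff _ (by omega) (by omega)).1 hcon
        omega
      have h2 := hc.cross (i := Lr n t r - 1) (by omega) (by omega)
      simp only [sub_add_cancel] at h2
      omega
  have := (hRiff _ hL0 hLn).1 hbL
  omega

lemma mem_row_iff {a : ℤ} : (a, r) ∈ Sbt n b t ↔ Lr n t r ≤ a ∧ a ≤ Rr n b r := by
  obtain ⟨hR0, hRn, hbR, hRiff⟩ := Rr_spec hc hr0 hrm
  obtain ⟨hL0, hLn, htL, hLiff⟩ := Lr_spec hc hr0 hrm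
  rw [mem_Sbt]
  constructor
  · rintro ⟨h1, h2, h3, h4⟩
    exact ⟨(hLiff a h1 h2).1 h4, (hRiff a h1 h2).1 h3⟩
  · rintro ⟨h1, h2⟩
    have ha0 : 0 ≤ a := le_trans hL0 h1
    have han : a ≤ n := le_trans h2 hRn
    exact ⟨ha0, han, (hRiff a ha0 han).2 h2, (hLiff a ha0 han).2 h1⟩

end RowEnds

section GbtStructure

variable {n m : ℤ} {b t : ℤ → ℤ} (hc : Cond n m b t)
include hc

lemma gbt_vert : (gbt n m b t).filter (fun e => e.horiz = false) =
    ((Finset.Icc 0 n).image fun i => colE i (b i - 1)) ∪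
    ((Finset.Icc 0 n).image fun i => colE i (t i)) := by
  classical
  ext e
  rw [Finset.mem_filter, Finset.mem_union, Finset.mem_image, Finset.mem_image]
  constructor
  · rintro ⟨he, hv⟩
    rw [isBd_gbt hc e] at he
    obtain ⟨a, r, rfl⟩ : ∃ a r, e = colE a r := by
      rcases edge_cases e with ⟨a, r, rfl⟩ | h
      · simp [rowE] at hv
      · exact h
    rcases he with ⟨h1, h2⟩ | ⟨h1, h2⟩
    · rw [colE_fst] at h1; rw [colE_snd] at h2
      rw [mem_Sbt] at h1
      rw [mem_Sbt] at h2
      push_neg at h2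
      obtain ⟨c1, c2, c3, c4⟩ := h1
      have : r = t a := by
        have := h2 c1 c2 (by omega)
        omega
      right
      exact ⟨a, Finset.mem_Icc.2 ⟨c1, c2⟩, by rw [this]⟩
    · rw [colE_fst] at h1; rw [colE_snd] at h2
      rw [mem_Sbt] at h1
      rw [mem_Sbt] at h2
      push_neg at h1
      obtain ⟨c1, c2, c3, c4⟩ := h2
      have : r = b a - 1 := by
        have := h1 c1 c2
        omega
      left
      exact ⟨a, Finset.mem_Icc.2 ⟨c1, c2⟩, by rw [this]⟩
  · rintro (⟨i, hi, rfl⟩ | ⟨i, hi, rfl⟩) <;> rw [Finset.mem_Icc] at hi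
    · refine ⟨(isBd_gbt hc _).2 ?_, rfl⟩
      right
      rw [colE_fst, colE_snd, mem_Sbt, mem_Sbt]
      have h1 := hc.hbt hi.1 hi.2
      have h2 := hc.b_nonneg hi.1 hi.2
      constructor
      · intro h; omega
      · refine ⟨hi.1, hi.2, by omega, by omega⟩
    · refine ⟨(isBd_gbt hc _).2 ?_, rfl⟩
      left
      rw [colE_fst, colE_snd, mem_Sbt, mem_Sbt]
      have h1 := hc.hbt hi.1 hi.2
      constructor
      · exact ⟨hi.1, hi.2, h1, le_rfl⟩
      · intro h; omega

lemma gbt_horiz : (gbt n m b t).filter (fun e => e.horiz = true) =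
    ((Finset.Icc 0 m).image fun r => rowE (Lr n t r - 1) r) ∪
    ((Finset.Icc 0 m).image fun r => rowE (Rr n b r) r) := by
  classical
  ext e
  rw [Finset.mem_filter, Finset.mem_union, Finset.mem_image, Finset.mem_image]
  constructor
  · rintro ⟨he, hv⟩
    rw [isBd_gbt hc e] at he
    obtain ⟨a, r, rfl⟩ : ∃ a r, e = rowE a r := by
      rcases edge_cases e with h | ⟨a, r, rfl⟩
      · exact h
      · simp [colE] at hv
    have hrange : 0 ≤ r ∧ r ≤ m := by
      rcases he with ⟨h1, _⟩ | ⟨_, h1⟩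
      · rw [rowE_fst] at h1
        obtain ⟨c1, c2, c3, c4⟩ := h1
        have := hc.b_nonneg c1 c2
        have := hc.t_le_m c1 c2
        omega
      · rw [rowE_snd] at h1
        obtain ⟨c1, c2, c3, c4⟩ := h1
        have := hc.b_nonneg c1 c2
        have := hc.t_le_m c1 c2
        omega
    rcases he with ⟨h1, h2⟩ | ⟨h1, h2⟩
    · rw [rowE_fst] at h1; rw [rowE_snd] at h2
      rw [mem_row_iff hc hrange.1 hrange.2] at h1
      rw [mem_row_iff hc hrange.1 hrange.2] at h2
      right
      refine ⟨r, Finset.mem_Icc.2 hrange, ?_⟩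
      have : a = Rr n b r := by omega
      rw [this]
    · rw [rowE_fst] at h1; rw [rowE_snd] at h2
      rw [mem_row_iff hc hrange.1 hrange.2] at h1
      rw [mem_row_iff hc hrange.1 hrange.2] at h2
      left
      refine ⟨r, Finset.mem_Icc.2 hrange, ?_⟩
      have : a = Lr n t r - 1 := by omega
      rw [this]
  · rintro (⟨r, hr, rfl⟩ | ⟨r, hr, rfl⟩) <;> rw [Finset.mem_Icc] at hr
    · refine ⟨(isBd_gbt hc _).2 ?_, rfl⟩
      right
      rw [rowE_fst, rowE_snd, mem_row_iff hc hr.1 hr.2, mem_row_iff hc hr.1 hr.2]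
      have := Lr_le_Rr hc hr.1 hr.2
      constructor
      · intro h; omega
      · constructor <;> omega
    · refine ⟨(isBd_gbt hc _).2 ?_, rfl⟩
      left
      rw [rowE_fst, rowE_snd, mem_row_iff hc hr.1 hr.2, mem_row_iff hc hr.1 hr.2]
      have := Lr_le_Rr hc hr.1 hr.2
      constructor
      · constructor <;> omega
      · intro h; omega

lemma gbt_card : (gbt n m b t).card = (2 * (n + m + 2)).toNat := by
  classical
  have hsplit := Finset.card_filter_add_card_filter_not
    (s := gbt n m b t) (p := fun e => e.horiz = false)
  have hv := gbt_vert hc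
  have hh : (gbt n m b t).filter (fun e => ¬ e.horiz = false) =
      (gbt n m b t).filter (fun e => e.horiz = true) := by
    apply Finset.filter_congr
    intro e _
    simp
  have hinjc : ∀ y : ℤ → ℤ, Set.InjOn (fun i => colE i (y i)) (Finset.Icc 0 n : Set ℤ) := by
    intro y i _ j _ hij
    simp only [colE, LatticeEdge.mk.injEq, Prod.mk.injEq, and_true] at hij
    exact hij.1
  have hinjr : ∀ y : ℤ → ℤ, Set.InjOn (fun r => rowE (y r) r) (Finset.Icc 0 m : Set ℤ) := by
    intro y i _ j _ hij
    simp only [rowE, LatticeEdge.mk.injEq, Prod.mk.injEq, and_true] at hij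
    exact hij.2
  have hd1 : Disjoint ((Finset.Icc 0 n).image fun i => colE i (b i - 1))
      ((Finset.Icc 0 n).image fun i => colE i (t i)) := by
    rw [Finset.disjoint_left]
    rintro e h1 h2
    obtain ⟨i, hi, rfl⟩ := Finset.mem_image.1 h1
    obtain ⟨j, hj, hee⟩ := Finset.mem_image.1 h2
    rw [Finset.mem_Icc] at hi hj
    simp only [colE, LatticeEdge.mk.injEq, Prod.mk.injEq, and_true] at hee
    obtain ⟨rfl, h2⟩ := hee
    have := hc.hbt hi.1 hi.2
    omega
  have hd2 : Disjoint ((Finset.Icc 0 m).image fun r => rowE (Lr n t r - 1) r)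
      ((Finset.Icc 0 m).image fun r => rowE (Rr n b r) r) := by
    rw [Finset.disjoint_left]
    rintro e h1 h2
    obtain ⟨r, hr, rfl⟩ := Finset.mem_image.1 h1
    obtain ⟨r', hr', hee⟩ := Finset.mem_image.1 h2
    rw [Finset.mem_Icc] at hr hr'
    simp only [rowE, LatticeEdge.mk.injEq, Prod.mk.injEq, and_true] at hee
    obtain ⟨h2, rfl⟩ := hee
    have h3 := Lr_le_Rr hc hr.1 hr.2
    omega
  have hcv : ((gbt n m b t).filter (fun e => e.horiz = false)).card = (n + 1).toNat + (n + 1).toNat := by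
    rw [hv, Finset.card_union_of_disjoint hd1,
      Finset.card_image_of_injOn (hinjc _), Finset.card_image_of_injOn (hinjc _), Int.card_Icc]
    norm_num
  have hch : ((gbt n m b t).filter (fun e => e.horiz = true)).card = (m + 1).toNat + (m + 1).toNat := by
    rw [gbt_horiz hc, Finset.card_union_of_disjoint hd2,
      Finset.card_image_of_injOn (hinjr _), Finset.card_image_of_injOn (hinjr _), Int.card_Icc]
    norm_num
  rw [hh, hch, hcv] at hsplit
  have hn := hc.hn
  have hm := hc.hm
  omega

end GbtStructure

end BetaAux

namespace BetaAux

open SimpleGraph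

section Closure

variable {γ : Finset LatticeEdge} {S : Set (ℤ × ℤ)}

lemma closed_adj (hbd : IsBd γ S) {u w : ℤ × ℤ} (hu : u ∈ S)
    (h : (complGraph γ).Adj u w) : w ∈ S := by
  by_contra hw
  rcases graphOf_adj.1 h with ⟨he, hv⟩ | ⟨he, hv⟩ | ⟨he, hv⟩ | ⟨he, hv⟩
  · refine he ((hbd _).2 (Or.inl ⟨?_, ?_⟩))
    · exact hu
    · rw [rowE_snd, ← hv]; exact hw
  · refine he ((hbd _).2 (Or.inr ⟨?_, ?_⟩))
    · exact hw
    · rw [rowE_snd, ← hv]; exact hu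
  · refine he ((hbd _).2 (Or.inl ⟨?_, ?_⟩))
    · exact hu
    · rw [colE_snd, ← hv]; exact hw
  · refine he ((hbd _).2 (Or.inr ⟨?_, ?_⟩))
    · exact hw
    · rw [colE_snd, ← hv]; exact hu

lemma closed_adj_compl (hbd : IsBd γ S) {u w : ℤ × ℤ} (hu : u ∉ S)
    (h : (complGraph γ).Adj u w) : w ∉ S :=
  fun hw => hu (closed_adj hbd hw h.symm)

end Closure

lemma box_finite (n m : ℤ) :
    ({p : ℤ × ℤ | 0 ≤ p.1 ∧ p.1 ≤ n ∧ 0 ≤ p.2 ∧ p.2 ≤ m}).Finite := by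
  apply Set.Finite.subset (Finset.finite_toSet (Finset.Icc 0 n ×ˢ Finset.Icc 0 m))
  rintro ⟨a, r⟩ ⟨h1, h2, h3, h4⟩
  simp only [Finset.coe_product, Set.mem_prod, Finset.mem_coe, Finset.mem_Icc]
  exact ⟨⟨h1, h2⟩, h3, h4⟩


lemma mem_Sbt' {n : ℤ} {b t : ℤ → ℤ} {a r : ℤ} (h : (a, r) ∈ Sbt n b t) :
    0 ≤ a ∧ a ≤ n ∧ b a ≤ r ∧ r ≤ t a := h

lemma Sbt_mk {n : ℤ} {b t : ℤ → ℤ} {a r : ℤ} (h1 : 0 ≤ a) (h2 : a ≤ n) (h3 : b a ≤ r)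
    (h4 : r ≤ t a) : (a, r) ∈ Sbt n b t := ⟨h1, h2, h3, h4⟩

section Forward

variable {n m : ℤ} {b t : ℤ → ℤ} (hc : Cond n m b t)
include hc

lemma reach_in : ∀ p ∈ Sbt n b t, (complGraph (gbt n m b t)).Reachable (0, 0) p := by
  have hbd := isBd_gbt hc
  have hcol : ∀ i r : ℤ, (i, r) ∈ Sbt n b t →
      (complGraph (gbt n m b t)).Reachable (i, b i) (i, r) := by
    intro i r hp
    obtain ⟨h1, h2, h3, h4⟩ := mem_Sbt' hp
    refine reach_seg_up h3 ?_
    intro y hy1 hy2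
    exact adj_col_in hbd (Sbt_mk h1 h2 hy1 (by omega)) (Sbt_mk h1 h2 (by omega) (by omega))
  have hbase : ∀ i : ℤ, 0 ≤ i → i ≤ n →
      (complGraph (gbt n m b t)).Reachable (0, 0) (i, b i) := by
    intro i hi
    refine Int.le_induction (motive := fun i _ => i ≤ n →
      (complGraph (gbt n m b t)).Reachable (0, 0) (i, b i)) ?_ ?_ i hi
    · intro _
      rw [hc.b0]
    · intro i hi0 ih hin
      have h1 : b (i + 1) ≤ t i := hc.cross hi0 (by omega)
      have h2 : b i ≤ b (i + 1) := hc.monoB hi0 (by omega) (by omega)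
      have h3 : (i, b (i + 1)) ∈ Sbt n b t := Sbt_mk hi0 (by omega) h2 h1
      have h4 : (i + 1, b (i + 1)) ∈ Sbt n b t :=
        Sbt_mk (by omega) hin le_rfl (hc.hbt (by omega) hin)
      have r1 := (ih (by omega)).trans (hcol i (b (i + 1)) h3)
      exact r1.trans (adj_row_in (isBd_gbt hc) h3 h4).reachable
  rintro ⟨i, r⟩ hp
  obtain ⟨h1, h2, h3, h4⟩ := mem_Sbt' hp
  exact (hbase i h1 h2).trans (hcol i r hp)

lemma reach_out : ∀ p ∉ Sbt n b t, (complGraph (gbt n m b t)).Reachable (0, -1) p := by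
  have hbd := isBd_gbt hc
  have hbox := hc.sbt_sub_box
  have hnot : ∀ a r : ℤ, r < 0 ∨ r > m ∨ a < 0 ∨ a > n → (a, r) ∉ Sbt n b t := by
    intro a r h hmem
    obtain ⟨c1, c2, c3, c4⟩ := mem_Sbt' hmem
    have d3 := hc.b_nonneg c1 c2
    have d4 := hc.t_le_m c1 c2
    omega
  -- reach along row -1 to (0,-1)
  have hrow : ∀ a : ℤ, (complGraph (gbt n m b t)).Reachable (a, -1) (0, -1) := by
    intro a
    rcases le_or_gt 0 a with h | h
    · exact (reach_seg_right h fun c hc1 hc2 =>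
        adj_row_out hbd (hnot _ _ (by omega)) (hnot _ _ (by omega))).symm
    · exact reach_seg_right (by omega) fun c hc1 hc2 =>
        adj_row_out hbd (hnot _ _ (by omega)) (hnot _ _ (by omega))
  rintro ⟨a, r⟩ hp
  by_cases hcase : 0 ≤ a ∧ a ≤ n ∧ 0 ≤ r ∧ t a < r
  · -- above the staircase: go up to m+1, left to column -1, down to (-1,-1), then to (0,-1)
    obtain ⟨ha0, han, hr0, hrt⟩ := hcase
    have hup : (complGraph (gbt n m b t)).Reachable (a, r) (a, m + 1) := by
      rcases le_or_gt r (m + 1) with h | h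
      · refine reach_seg_up h ?_
        intro y hy1 hy2
        refine adj_col_out hbd ?_ ?_
        · intro hmem; exact absurd (mem_Sbt' hmem).2.2.2 (by omega)
        · intro hmem; exact absurd (mem_Sbt' hmem).2.2.2 (by omega)
      · refine Reachable.symm (reach_seg_up (by omega) ?_)
        intro y hy1 hy2
        exact adj_col_out hbd (hnot _ _ (by omega)) (hnot _ _ (by omega))
    have hleft : (complGraph (gbt n m b t)).Reachable (-1, m + 1) (a, m + 1) := by
      refine reach_seg_right (by omega) ?_
      intro c hc1 hc2
      exact adj_row_out hbd (hnot _ _ (by omega)) (hnot _ _ (by omega))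
    have hdescend : (complGraph (gbt n m b t)).Reachable (-1, -1) (-1, m + 1) := by
      refine reach_seg_up (by have := hc.hm; omega) ?_
      intro y hy1 hy2
      exact adj_col_out hbd (hnot _ _ (by omega)) (hnot _ _ (by omega))
    exact ((hrow (-1)).symm.trans (hdescend.trans (hleft.trans hup.symm))).symm.symm
  · rcases le_or_gt r (-1) with hr | hr
    · -- strictly below the horizontal axis
      have seg : (complGraph (gbt n m b t)).Reachable (a, r) (a, -1) := by
        refine reach_seg_up hr ?_
        intro y hy1 hy2
        exact adj_col_out hbd (hnot _ _ (by omega)) (hnot _ _ (by omega))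
      exact (seg.trans (hrow a)).symm
    · -- below the staircase (or outside the columns): straight descent to row -1
      have hr0 : 0 ≤ r := by omega
      have hside : a < 0 ∨ a > n ∨ (0 ≤ a ∧ a ≤ n ∧ r < b a) := by
        by_cases ha0 : 0 ≤ a
        · by_cases han : a ≤ n
          · by_cases hba : b a ≤ r
            · exfalso
              have hta : ¬ r ≤ t a := fun hta => hp (Sbt_mk ha0 han hba hta)
              exact hcase ⟨ha0, han, hr0, by omega⟩
            · exact Or.inr (Or.inr ⟨ha0, han, by omega⟩)
          · exact Or.inr (Or.inl (by omega))
        · exact Or.inl (by omega)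
      have hout : ∀ y : ℤ, -1 ≤ y → y ≤ r → (a, y) ∉ Sbt n b t := by
        intro y hy1 hy2
        rcases hside with h | h | ⟨h1, h2, h3⟩
        · exact hnot _ _ (by omega)
        · exact hnot _ _ (by omega)
        · intro hmem
          exact absurd (mem_Sbt' hmem).2.2.1 (by omega)
      have seg : (complGraph (gbt n m b t)).Reachable (a, -1) (a, r) := by
        refine reach_seg_up (by omega) ?_
        intro y hy1 hy2
        exact adj_col_out hbd (hout _ (by omega) (by omega)) (hout _ (by omega) (by omega))
      exact (hrow a).symm.trans seg

end Forward

end BetaAux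

namespace BetaAux

open SimpleGraph

section Forward2

variable {n m : ℤ} {b t : ℤ → ℤ} (hc : Cond n m b t)
include hc

lemma zero_mem_sbt : ((0 : ℤ), (0 : ℤ)) ∈ Sbt n b t := by
  have hn' : (0 : ℤ) ≤ n := by have := hc.hn; omega
  exact Sbt_mk le_rfl hn' hc.b0.le (hc.t_nonneg le_rfl hn')

lemma corner_mem_sbt : ((n : ℤ), (m : ℤ)) ∈ Sbt n b t := by
  have hn' : (0 : ℤ) ≤ n := by have := hc.hn; omega
  exact Sbt_mk hn' le_rfl (hc.b_le_m hn' le_rfl) hc.tn.ge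

lemma supp_in : ((complGraph (gbt n m b t)).connectedComponentMk (0, 0)).supp = Sbt n b t := by
  exact supp_mk_eq (zero_mem_sbt hc) (reach_in hc) (fun u w hu h => closed_adj (isBd_gbt hc) hu h)

lemma supp_out :
    ((complGraph (gbt n m b t)).connectedComponentMk (0, -1)).supp = (Sbt n b t)ᶜ := by
  refine supp_mk_eq ?_ (reach_out hc) (fun u w hu h => closed_adj_compl (isBd_gbt hc) hu h)
  intro hmem
  obtain ⟨c1, c2, c3, c4⟩ := mem_Sbt' hmem
  have := hc.b0
  omega

lemma sbt_finite : (Sbt n b t).Finite := (box_finite n m).subset hc.sbt_sub_box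

omit hc in
lemma compl_infinite' {T : Set (ℤ × ℤ)} (hsub : ∀ k : ℕ, ((0 : ℤ), (-1 - k : ℤ)) ∈ T) :
    ¬ T.Finite := by
  intro h
  refine Set.infinite_of_injective_forall_mem (f := fun k : ℕ => ((0, -1 - k) : ℤ × ℤ)) ?_ hsub h
  intro k1 k2 hk
  simp only [Prod.mk.injEq, true_and] at hk
  omega

lemma compl_infinite : ¬ ((Sbt n b t)ᶜ).Finite := by
  refine compl_infinite' ?_
  intro k hmem
  obtain ⟨c1, c2, c3, c4⟩ := mem_Sbt' hmem
  have h0 := hc.b0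
  have hk : (0 : ℤ) ≤ (k : ℤ) := Int.natCast_nonneg k
  omega

lemma gbt_isContour : IsContour (gbt n m b t) := by
  constructor
  · refine ⟨(complGraph (gbt n m b t)).connectedComponentMk (0, 0), ?_, ?_⟩
    · show (((complGraph (gbt n m b t)).connectedComponentMk (0, 0)).supp).Finite
      rw [supp_in hc]; exact sbt_finite hc
    · rintro C hC
      obtain ⟨v, rfl⟩ := C.exists_rep
      by_cases hv : v ∈ Sbt n b t
      · exact (ConnectedComponent.sound (reach_in hc v hv)).symm
      · exfalso
        have heq : (complGraph (gbt n m b t)).connectedComponentMk v =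
            (complGraph (gbt n m b t)).connectedComponentMk (0, -1) :=
          (ConnectedComponent.sound (reach_out hc v hv)).symm
        have hC2 : ((complGraph (gbt n m b t)).connectedComponentMk v).supp.Finite := hC
        rw [heq, supp_out hc] at hC2
        exact compl_infinite hc hC2
  · intro e he C hC
    have hBd : Bdry (Sbt n b t) e := (isBd_gbt hc e).1 he
    have hmono : complGraph (gbt n m b t) ≤ graphOf {f | f ∉ gbt n m b t ∨ f = e} := by
      rintro u v ⟨hne, e', he', hs⟩
      exact ⟨hne, e', Or.inl he', hs⟩
    -- a vertex `w` adjacent across `e`, and a vertex inside / outside: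
    obtain ⟨p, q, hp, hq, hadj⟩ :
        ∃ p q, p ∈ Sbt n b t ∧ q ∉ Sbt n b t ∧
          (graphOf {f | f ∉ gbt n m b t ∨ f = e}).Adj p q := by
      rcases hBd with ⟨h1, h2⟩ | ⟨h1, h2⟩
      · exact ⟨e.fst, e.snd, h1, h2, ⟨fun hq => h2 (hq ▸ h1), e, Or.inr rfl, rfl⟩⟩
      · exact ⟨e.snd, e.fst, h2, h1, ⟨fun hq => h1 (hq ▸ h2), e,
          Or.inr rfl, by rw [LatticeEdge.ends, Sym2.eq_swap]⟩⟩
    have hhub : ∀ z : ℤ × ℤ, (graphOf {f | f ∉ gbt n m b t ∨ f = e}).Reachable z p := by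
      intro z
      by_cases hz : z ∈ Sbt n b t
      · exact ((reach_in hc z hz).mono hmono).symm.trans ((reach_in hc p hp).mono hmono)
      · exact (((reach_out hc z hz).mono hmono).symm.trans
          ((reach_out hc q hq).mono hmono)).trans hadj.symm.reachable
    obtain ⟨v, rfl⟩ := C.exists_rep
    refine compl_infinite' (T := ((graphOf {f | f ∉ gbt n m b t ∨ f = e}).connectedComponentMk
      v).supp) ?_ hC
    intro k
    rw [ConnectedComponent.mem_supp_iff]
    exact ConnectedComponent.sound ((hhub _).trans (hhub v).symm)

lemma gbt_mem_gammaN :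
    gbt n m b t ∈ GammaN {0, ((n : ℤ), (m : ℤ))} (2 * (n + m + 2)).toNat := by
  refine ⟨⟨gbt_isContour hc, ?_⟩, gbt_card hc⟩
  refine ⟨(complGraph (gbt n m b t)).connectedComponentMk (0, 0), ?_, ?_⟩
  · rw [supp_in hc]; exact sbt_finite hc
  · rw [supp_in hc]
    rintro z hz
    rcases Set.mem_insert_iff.1 hz with rfl | hz2
    · exact zero_mem_sbt hc
    · rw [Set.mem_singleton_iff] at hz2
      rw [hz2]
      exact corner_mem_sbt hc

end Forward2

end BetaAux

namespace BetaAux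

open SimpleGraph

lemma int_ivt {P : ℤ → Prop} {a c : ℤ} (hac : a ≤ c) (ha : P a) (hc : ¬ P c) :
    ∃ d, a ≤ d ∧ d < c ∧ P d ∧ ¬ P (d + 1) := by
  by_contra hno
  push_neg at hno
  have hall : ∀ e, a ≤ e → e ≤ c → P e := by
    intro e he
    refine Int.le_induction (motive := fun e _ => e ≤ c → P e) ?_ ?_ e he
    · intro _; exact ha
    · intro e he1 ih he2
      exact hno e he1 (by omega) (ih (by omega))
  exact hc (hall c hac le_rfl)

lemma walk_support_closed {G : SimpleGraph (ℤ × ℤ)} {S : Set (ℤ × ℤ)}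
    (hcl : ∀ ⦃u w⦄, u ∈ S → G.Adj u w → w ∈ S) :
    ∀ {v u : ℤ × ℤ} (p : G.Walk v u), v ∈ S → ∀ w ∈ p.support, w ∈ S := by
  intro v u p
  induction p with
  | nil =>
    intro hv w hw
    rw [SimpleGraph.Walk.mem_support_nil_iff] at hw
    rwa [hw]
  | cons h q ih =>
    intro hv w hw
    rw [SimpleGraph.Walk.support_cons, List.mem_cons] at hw
    rcases hw with rfl | hw
    · exact hv
    · exact ih (hcl hv h) w hw

/-- vertical slice of a finite vertex set -/
noncomputable def colF (K : Finset (ℤ × ℤ)) (i : ℤ) : Finset ℤ :=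
  (K.filter fun p => p.1 = i).image Prod.snd

/-- horizontal slice of a finite vertex set -/
noncomputable def rowF (K : Finset (ℤ × ℤ)) (r : ℤ) : Finset ℤ :=
  (K.filter fun p => p.2 = r).image Prod.fst

lemma mem_colF {K : Finset (ℤ × ℤ)} {i y : ℤ} : y ∈ colF K i ↔ (i, y) ∈ K := by
  classical
  rw [colF, Finset.mem_image]
  constructor
  · rintro ⟨p, hp, rfl⟩
    rw [Finset.mem_filter] at hp
    have : (i, p.2) = p := by rw [← hp.2]
    rw [this]; exact hp.1
  · intro h
    exact ⟨(i, y), Finset.mem_filter.2 ⟨h, rfl⟩, rfl⟩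

lemma mem_rowF {K : Finset (ℤ × ℤ)} {r x : ℤ} : x ∈ rowF K r ↔ (x, r) ∈ K := by
  classical
  rw [rowF, Finset.mem_image]
  constructor
  · rintro ⟨p, hp, rfl⟩
    rw [Finset.mem_filter] at hp
    have : (p.1, r) = p := by rw [← hp.2]
    rw [this]; exact hp.1
  · intro h
    exact ⟨(x, r), Finset.mem_filter.2 ⟨h, rfl⟩, rfl⟩

noncomputable def bI (K : Finset (ℤ × ℤ)) (i : ℤ) : ℤ :=
  if h : (colF K i).Nonempty then (colF K i).min' h else 0

noncomputable def tI (K : Finset (ℤ × ℤ)) (i : ℤ) : ℤ :=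
  if h : (colF K i).Nonempty then (colF K i).max' h else 0

noncomputable def lI (K : Finset (ℤ × ℤ)) (r : ℤ) : ℤ :=
  if h : (rowF K r).Nonempty then (rowF K r).min' h else 0

noncomputable def rI (K : Finset (ℤ × ℤ)) (r : ℤ) : ℤ :=
  if h : (rowF K r).Nonempty then (rowF K r).max' h else 0

lemma bI_tI_spec {K : Finset (ℤ × ℤ)} {i y : ℤ} (h : (i, y) ∈ K) :
    (i, bI K i) ∈ K ∧ (i, tI K i) ∈ K ∧ bI K i ≤ y ∧ y ≤ tI K i := by
  have hne : (colF K i).Nonempty := ⟨y, mem_colF.2 h⟩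
  rw [bI, tI, dif_pos hne, dif_pos hne]
  exact ⟨mem_colF.1 (Finset.min'_mem _ hne), mem_colF.1 (Finset.max'_mem _ hne),
    Finset.min'_le _ _ (mem_colF.2 h), Finset.le_max' _ _ (mem_colF.2 h)⟩

lemma lI_rI_spec {K : Finset (ℤ × ℤ)} {r x : ℤ} (h : (x, r) ∈ K) :
    (lI K r, r) ∈ K ∧ (rI K r, r) ∈ K ∧ lI K r ≤ x ∧ x ≤ rI K r := by
  have hne : (rowF K r).Nonempty := ⟨x, mem_rowF.2 h⟩
  rw [lI, rI, dif_pos hne, dif_pos hne]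
  exact ⟨mem_rowF.1 (Finset.min'_mem _ hne), mem_rowF.1 (Finset.max'_mem _ hne),
    Finset.min'_le _ _ (mem_rowF.2 h), Finset.le_max' _ _ (mem_rowF.2 h)⟩

end BetaAux

namespace BetaAux

open SimpleGraph

set_option maxHeartbeats 1000000 in
theorem struct_main {n m : ℤ} {γ : Finset LatticeEdge} {I : Set (ℤ × ℤ)}
    (hn : 1 ≤ n) (hm : 1 ≤ m) (hIfin : I.Finite) (hbd : IsBd γ I)
    (hconn : ∀ u v : ℤ × ℤ, u ∈ I → v ∈ I → (complGraph γ).Reachable u v)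
    (hcl : ∀ ⦃u w : ℤ × ℤ⦄, u ∈ I → (complGraph γ).Adj u w → w ∈ I)
    (h0 : ((0 : ℤ), (0 : ℤ)) ∈ I) (hx : ((n : ℤ), (m : ℤ)) ∈ I)
    (hcard : γ.card = (2 * (n + m + 2)).toNat) :
    ∃ b t : ℤ → ℤ, Cond n m b t ∧ I = Sbt n b t ∧ γ = gbt n m b t := by
  classical
  set K := hIfin.toFinset with hKdef
  have hKI : ∀ p : ℤ × ℤ, p ∈ K ↔ p ∈ I := fun p => Set.Finite.mem_toFinset hIfin
  obtain ⟨p⟩ := hconn _ _ h0 hx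
  have hsup : ∀ w ∈ p.support, w ∈ I := walk_support_closed hcl p h0
  -- occupancy of all columns and rows of the box
  have hoccC : ∀ i : ℤ, 0 ≤ i → i ≤ n → ∃ y, (i, y) ∈ K := by
    intro i h1 h2
    obtain ⟨w, hw, hw1⟩ := walk_ivt Prod.fst adj_fst_le p h1 h2
    refine ⟨w.2, (hKI _).2 ?_⟩
    have he : ((i : ℤ), w.2) = w := by rw [← hw1]
    rw [he]; exact hsup w hw
  have hoccR : ∀ r : ℤ, 0 ≤ r → r ≤ m → ∃ x, (x, r) ∈ K := by
    intro r h1 h2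
    obtain ⟨w, hw, hw1⟩ := walk_ivt Prod.snd adj_snd_le p h1 h2
    refine ⟨w.1, (hKI _).2 ?_⟩
    have he : (w.1, (r : ℤ)) = w := by rw [← hw1]
    rw [he]; exact hsup w hw
  have hcross : ∀ i : ℤ, 0 ≤ i → i < n → ∃ y, (i, y) ∈ K ∧ (i + 1, y) ∈ K := by
    intro i h1 h2
    obtain ⟨y, hy1, hy2, _⟩ := walk_cross_col p h1 h2
    exact ⟨y, (hKI _).2 (hsup _ hy1), (hKI _).2 (hsup _ hy2)⟩
  have hbt : ∀ i, 0 ≤ i → i ≤ n → bI K i ≤ tI K i := by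
    intro i h1 h2
    obtain ⟨y, hy⟩ := hoccC i h1 h2
    obtain ⟨_, _, hb2, ht2⟩ := bI_tI_spec hy
    omega
  have hlr : ∀ r, 0 ≤ r → r ≤ m → lI K r ≤ rI K r := by
    intro r h1 h2
    obtain ⟨x, hx2⟩ := hoccR r h1 h2
    obtain ⟨_, _, hb2, ht2⟩ := lI_rI_spec hx2
    omega
  -- the four extremal boundary edges of each column/row
  have hvedge : ∀ i y : ℤ, (i, y) ∈ K → colE i (bI K i - 1) ∈ γ ∧ colE i (tI K i) ∈ γ := by
    intro i y hy
    obtain ⟨hb1, ht1, _, _⟩ := bI_tI_spec hy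
    constructor
    · refine (hbd _).2 (Or.inr ⟨?_, ?_⟩)
      · intro hmem
        obtain ⟨_, _, hmin, _⟩ := bI_tI_spec ((hKI _).2 hmem)
        omega
      · have he : ((i : ℤ), bI K i - 1 + 1) = (i, bI K i) := by rw [sub_add_cancel]
        rw [colE_snd, he]
        exact (hKI _).1 hb1
    · refine (hbd _).2 (Or.inl ⟨(hKI _).1 ht1, ?_⟩)
      rw [colE_snd]
      intro hmem
      obtain ⟨_, _, _, hmax⟩ := bI_tI_spec ((hKI _).2 hmem)
      omega
  have hhedge : ∀ r x : ℤ, (x, r) ∈ K → rowE (lI K r - 1) r ∈ γ ∧ rowE (rI K r) r ∈ γ := by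
    intro r x hy
    obtain ⟨hb1, ht1, _, _⟩ := lI_rI_spec hy
    constructor
    · refine (hbd _).2 (Or.inr ⟨?_, ?_⟩)
      · intro hmem
        obtain ⟨_, _, hmin, _⟩ := lI_rI_spec ((hKI _).2 hmem)
        omega
      · have he : ((lI K r - 1 + 1 : ℤ), r) = (lI K r, r) := by rw [sub_add_cancel]
        rw [rowE_snd, he]
        exact (hKI _).1 hb1
    · refine (hbd _).2 (Or.inl ⟨(hKI _).1 ht1, ?_⟩)
      rw [rowE_snd]
      intro hmem
      obtain ⟨_, _, _, hmax⟩ := lI_rI_spec ((hKI _).2 hmem)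
      omega
  -- the counting argument
  set γv := γ.filter (fun e => e.horiz = false) with hγv
  set γh := γ.filter (fun e => e.horiz = true) with hγh
  set src := (Finset.Icc (0 : ℤ) n) ×ˢ ({false, true} : Finset Bool) with hsrcdef
  set src' := (Finset.Icc (0 : ℤ) m) ×ˢ ({false, true} : Finset Bool) with hsrcdef'
  set g : ℤ × Bool → LatticeEdge := fun q => colE q.1 (if q.2 then tI K q.1 else bI K q.1 - 1)
    with hgdef
  set g' : ℤ × Bool → LatticeEdge := fun q => rowE (if q.2 then rI K q.1 else lI K q.1 - 1) q.1
    with hgdef'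
  have hgmap : ∀ q ∈ src, g q ∈ γv := by
    rintro ⟨i, s⟩ hq
    rw [hsrcdef, Finset.mem_product, Finset.mem_Icc] at hq
    obtain ⟨y, hy⟩ := hoccC i hq.1.1 hq.1.2
    obtain ⟨h1, h2⟩ := hvedge i y hy
    cases s
    · exact Finset.mem_filter.2 ⟨h1, rfl⟩
    · exact Finset.mem_filter.2 ⟨h2, rfl⟩
  have hgmap' : ∀ q ∈ src', g' q ∈ γh := by
    rintro ⟨r, s⟩ hq
    rw [hsrcdef', Finset.mem_product, Finset.mem_Icc] at hq
    obtain ⟨x2, hx2⟩ := hoccR r hq.1.1 hq.1.2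
    obtain ⟨h1, h2⟩ := hhedge r x2 hx2
    cases s
    · exact Finset.mem_filter.2 ⟨h1, rfl⟩
    · exact Finset.mem_filter.2 ⟨h2, rfl⟩
  have hginj : Set.InjOn g src := by
    rintro ⟨i, s⟩ hq ⟨j, s'⟩ hq' he
    rw [hsrcdef, Finset.coe_product] at hq hq'
    obtain ⟨hq1, -⟩ := hq
    obtain ⟨hq1', -⟩ := hq'
    rw [Finset.mem_coe, Finset.mem_Icc] at hq1 hq1'
    simp only [hgdef, colE, LatticeEdge.mk.injEq, Prod.mk.injEq, and_true] at he
    obtain ⟨rfl, he2⟩ := he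
    have hbti := hbt i hq1.1 hq1.2
    cases s <;> cases s'
    · rfl
    · exfalso
      have he3 : bI K i - 1 = tI K i := he2
      omega
    · exfalso
      have he3 : tI K i = bI K i - 1 := he2
      omega
    · rfl
  have hginj' : Set.InjOn g' src' := by
    rintro ⟨r, s⟩ hq ⟨r', s'⟩ hq' he
    rw [hsrcdef', Finset.coe_product] at hq hq'
    obtain ⟨hq1, -⟩ := hq
    obtain ⟨hq1', -⟩ := hq'
    rw [Finset.mem_coe, Finset.mem_Icc] at hq1 hq1'
    simp only [hgdef', rowE, LatticeEdge.mk.injEq, Prod.mk.injEq, and_true] at he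
    obtain ⟨he2, rfl⟩ := he
    have hlrr := hlr r hq1.1 hq1.2
    cases s <;> cases s'
    · rfl
    · exfalso
      have he3 : lI K r - 1 = rI K r := he2
      omega
    · exfalso
      have he3 : rI K r = lI K r - 1 := he2
      omega
    · rfl
  have hv_le : src.card ≤ γv.card := Finset.card_le_card_of_injOn g hgmap hginj
  have hh_le : src'.card ≤ γh.card := Finset.card_le_card_of_injOn g' hgmap' hginj'
  have hsum : γv.card + γh.card = γ.card := by
    have hdis : Disjoint γv γh := by
      rw [Finset.disjoint_left]
      intro e he1 he2
      have h1 := (Finset.mem_filter.1 he1).2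
      have h2 := (Finset.mem_filter.1 he2).2
      rw [h1] at h2
      exact Bool.noConfusion h2
    rw [← Finset.card_union_of_disjoint hdis]
    congr 1
    ext e
    simp only [hγv, hγh, Finset.mem_union, Finset.mem_filter]
    cases he : e.horiz <;> tauto
  have hsrc_card : src.card = (n + 1).toNat * 2 := by
    rw [hsrcdef, Finset.card_product, Int.card_Icc]
    norm_num
  have hsrc_card' : src'.card = (m + 1).toNat * 2 := by
    rw [hsrcdef', Finset.card_product, Int.card_Icc]
    norm_num
  have hveq : γv.card = src.card := by omega
  have hheq : γh.card = src'.card := by omega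
  have himg : src.image g = γv :=
    Finset.eq_of_subset_of_card_le (Finset.image_subset_iff.2 hgmap)
      (by rw [Finset.card_image_of_injOn hginj]; omega)
  have himg' : src'.image g' = γh :=
    Finset.eq_of_subset_of_card_le (Finset.image_subset_iff.2 hgmap')
      (by rw [Finset.card_image_of_injOn hginj']; omega)
  -- characterization of all vertical / horizontal edges of γ
  have hvchar : ∀ e ∈ γ, e.horiz = false →
      ∃ i, 0 ≤ i ∧ i ≤ n ∧ (e = colE i (bI K i - 1) ∨ e = colE i (tI K i)) := by
    intro e he hh
    have hmem : e ∈ γv := Finset.mem_filter.2 ⟨he, hh⟩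
    rw [← himg] at hmem
    obtain ⟨⟨i, s⟩, hq, rfl⟩ := Finset.mem_image.1 hmem
    rw [hsrcdef, Finset.mem_product, Finset.mem_Icc] at hq
    cases s
    · exact ⟨i, hq.1.1, hq.1.2, Or.inl rfl⟩
    · exact ⟨i, hq.1.1, hq.1.2, Or.inr rfl⟩
  have hhchar : ∀ e ∈ γ, e.horiz = true →
      ∃ r, 0 ≤ r ∧ r ≤ m ∧ (e = rowE (lI K r - 1) r ∨ e = rowE (rI K r) r) := by
    intro e he hh
    have hmem : e ∈ γh := Finset.mem_filter.2 ⟨he, hh⟩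
    rw [← himg'] at hmem
    obtain ⟨⟨r, s⟩, hq, rfl⟩ := Finset.mem_image.1 hmem
    rw [hsrcdef', Finset.mem_product, Finset.mem_Icc] at hq
    cases s
    · exact ⟨r, hq.1.1, hq.1.2, Or.inl rfl⟩
    · exact ⟨r, hq.1.1, hq.1.2, Or.inr rfl⟩
  -- every occupied vertex lies in the box
  have hIbox : ∀ q : ℤ × ℤ, q ∈ K → 0 ≤ q.1 ∧ q.1 ≤ n ∧ 0 ≤ q.2 ∧ q.2 ≤ m := by
    rintro ⟨a, y⟩ hq
    have hv := (hvedge a y hq).2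
    obtain ⟨i, hi1, hi2, hi3⟩ := hvchar _ hv rfl
    have hai : a = i := by
      rcases hi3 with he | he
      · simp only [colE, LatticeEdge.mk.injEq, Prod.mk.injEq, and_true] at he
        exact he.1
      · simp only [colE, LatticeEdge.mk.injEq, Prod.mk.injEq, and_true] at he
        exact he.1
    have hh := (hhedge y a hq).2
    obtain ⟨r, hr1, hr2, hr3⟩ := hhchar _ hh rfl
    have hyr : y = r := by
      rcases hr3 with he | he
      · simp only [rowE, LatticeEdge.mk.injEq, Prod.mk.injEq, and_true] at he
        exact he.2
      · simp only [rowE, LatticeEdge.mk.injEq, Prod.mk.injEq, and_true] at he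
        exact he.2
    exact ⟨by omega, by omega, by omega, by omega⟩
  -- columns and rows are intervals
  have hcolint : ∀ a y : ℤ, 0 ≤ a → a ≤ n → bI K a ≤ y → y ≤ tI K a → (a, y) ∈ K := by
    intro a y h1 h2 h3 h4
    by_contra hnot
    obtain ⟨y0, hy0⟩ := hoccC a h1 h2
    obtain ⟨hbm, htm, _, _⟩ := bI_tI_spec hy0
    obtain ⟨d, hd1, hd2, hd3, hd4⟩ := int_ivt (P := fun c => ((a : ℤ), c) ∈ K) h3 hbm hnot
    have hed : colE a d ∈ γ := by
      refine (hbd _).2 (Or.inl ⟨(hKI _).1 hd3, ?_⟩)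
      rw [colE_snd]
      exact fun hmem => hd4 ((hKI _).2 hmem)
    obtain ⟨j, hj1, hj2, hj3⟩ := hvchar _ hed rfl
    rcases hj3 with he | he <;>
      simp only [colE, LatticeEdge.mk.injEq, Prod.mk.injEq, and_true] at he <;>
      obtain ⟨rfl, he2⟩ := he
    · omega
    · omega
  have hrowint : ∀ r x : ℤ, 0 ≤ r → r ≤ m → lI K r ≤ x → x ≤ rI K r → (x, r) ∈ K := by
    intro r x2 h1 h2 h3 h4
    by_contra hnot
    obtain ⟨x0, hx0⟩ := hoccR r h1 h2
    obtain ⟨hbm, htm, _, _⟩ := lI_rI_spec hx0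
    obtain ⟨d, hd1, hd2, hd3, hd4⟩ := int_ivt (P := fun c => ((c : ℤ), r) ∈ K) h3 hbm hnot
    have hed : rowE d r ∈ γ := by
      refine (hbd _).2 (Or.inl ⟨(hKI _).1 hd3, ?_⟩)
      rw [rowE_snd]
      exact fun hmem => hd4 ((hKI _).2 hmem)
    obtain ⟨j, hj1, hj2, hj3⟩ := hhchar _ hed rfl
    rcases hj3 with he | he <;>
      simp only [rowE, LatticeEdge.mk.injEq, Prod.mk.injEq, and_true] at he <;>
      obtain ⟨he2, rfl⟩ := he
    · omega
    · omega
  -- endpoints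
  have hb0 : bI K 0 = 0 := by
    obtain ⟨hb1, _, hb2, _⟩ := bI_tI_spec ((hKI _).2 h0)
    have := hIbox _ hb1
    omega
  have htn : tI K n = m := by
    obtain ⟨_, ht1, _, ht2⟩ := bI_tI_spec ((hKI _).2 hx)
    have := hIbox _ ht1
    omega
  -- crossing
  have hbtc : ∀ i, 0 ≤ i → i < n → bI K (i + 1) ≤ tI K i ∧ bI K i ≤ tI K (i + 1) := by
    intro i h1 h2
    obtain ⟨y, hy1, hy2⟩ := hcross i h1 h2
    obtain ⟨_, _, hb1, ht1⟩ := bI_tI_spec hy1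
    obtain ⟨_, _, hb2, ht2⟩ := bI_tI_spec hy2
    exact ⟨by omega, by omega⟩
  -- monotonicity of tI K
  have hmonoT1 : ∀ i, 0 ≤ i → i < n → tI K i ≤ tI K (i + 1) := by
    intro i h1 h2
    by_contra hcon
    push_neg at hcon
    set r := tI K (i + 1) + 1 with hrdef
    have hir : ((i : ℤ), r) ∈ K := by
      refine hcolint i r h1 (by omega) ?_ (by omega)
      have := (hbtc i h1 h2).2
      omega
    have hrbox := hIbox _ hir
    have hnotip1 : ((i + 1 : ℤ), r) ∉ K := by
      intro hmem
      obtain ⟨_, _, _, hmax⟩ := bI_tI_spec hmem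
      omega
    have hRr : rI K r ≤ i := by
      by_contra hR
      push_neg at hR
      have hL := (lI_rI_spec hir).2.2.1
      exact hnotip1 (hrowint r (i + 1) (by omega) (by omega) (by omega) (by omega))
    have hclaim : ∀ j, i + 1 ≤ j → j ≤ n → tI K j ≤ tI K (i + 1) := by
      intro j hj
      refine Int.le_induction (motive := fun j _ => j ≤ n → tI K j ≤ tI K (i + 1)) ?_ ?_ j hj
      · intro _; exact le_rfl
      · intro j hj1 ih hj2
        by_contra hcon2
        push_neg at hcon2
        have hjr : ((j + 1 : ℤ), r) ∈ K := by
          refine hcolint (j + 1) r (by omega) hj2 ?_ (by omega)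
          have hc := (hbtc j (by omega) (by omega)).1
          have hih := ih (by omega)
          omega
        have := (lI_rI_spec hjr).2.2.2
        omega
    have hcl1 := hclaim n (by omega) le_rfl
    have hti : ((i : ℤ), tI K i) ∈ K := (bI_tI_spec hir).2.1
    have := (hIbox _ hti).2.2.2
    omega
  -- monotonicity of bI K
  have hmonoB1 : ∀ i, 0 ≤ i → i < n → bI K i ≤ bI K (i + 1) := by
    intro i h1 h2
    by_contra hcon
    push_neg at hcon
    set r := bI K i - 1 with hrdef
    have hi1r : ((i + 1 : ℤ), r) ∈ K := by
      refine hcolint (i + 1) r (by omega) (by omega) (by omega) ?_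
      have := (hbtc i h1 h2).2
      omega
    have hrbox := hIbox _ hi1r
    have hnotir : ((i : ℤ), r) ∉ K := by
      intro hmem
      obtain ⟨_, _, hmin, _⟩ := bI_tI_spec hmem
      omega
    have hLr : i + 1 ≤ lI K r := by
      by_contra hL
      push_neg at hL
      have hR := (lI_rI_spec hi1r).2.2.2
      exact hnotir (hrowint r i (by omega) (by omega) (by omega) (by omega))
    have hclaim : ∀ j, 0 ≤ j → j ≤ i → bI K i ≤ bI K (i - j) := by
      intro j hj
      refine Int.le_induction (motive := fun j _ => j ≤ i → bI K i ≤ bI K (i - j)) ?_ ?_ j hj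
      · intro _
        have he : i - (0 : ℤ) = i := sub_zero i
        rw [he]
      · intro j hj1 ih hj2
        by_contra hcon2
        push_neg at hcon2
        have hjj : ((i - (j + 1) : ℤ), r) ∈ K := by
          refine hcolint _ r (by omega) (by omega) (by omega) ?_
          have hc := (hbtc (i - (j + 1)) (by omega) (by omega)).1
          have he : (i - (j + 1)) + 1 = i - j := by ring
          rw [he] at hc
          have := ih (by omega)
          omega
        have := (lI_rI_spec hjj).2.2.1
        omega
    have hcl1 := hclaim i (by omega) le_rfl
    have he : i - i = 0 := sub_self i
    rw [he] at hcl1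
    have hb1K : ((i + 1 : ℤ), bI K (i + 1)) ∈ K := (bI_tI_spec hi1r).1
    have := (hIbox _ hb1K).2.2.1
    omega
  have hmonoB : ∀ ⦃i j⦄, 0 ≤ i → i ≤ j → j ≤ n → bI K i ≤ bI K j := by
    intro i j h1 hij
    refine Int.le_induction (motive := fun j _ => j ≤ n → bI K i ≤ bI K j) ?_ ?_ j hij
    · intro _; exact le_rfl
    · intro j hj ih hj2
      exact le_trans (ih (by omega)) (hmonoB1 j (by omega) (by omega))
  have hmonoT : ∀ ⦃i j⦄, 0 ≤ i → i ≤ j → j ≤ n → tI K i ≤ tI K j := by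
    intro i j h1 hij
    refine Int.le_induction (motive := fun j _ => j ≤ n → tI K i ≤ tI K j) ?_ ?_ j hij
    · intro _; exact le_rfl
    · intro j hj ih hj2
      exact le_trans (ih (by omega)) (hmonoT1 j (by omega) (by omega))
  have hcond : Cond n m (bI K) (tI K) :=
    ⟨hn, hm, hmonoB, hmonoT, hb0, htn, fun i h1 h2 => hbt i h1 h2,
      fun i h1 h2 => (hbtc i h1 h2).1⟩
  have hIS : I = Sbt n (bI K) (tI K) := by
    ext q
    obtain ⟨a, y⟩ := q
    rw [mem_Sbt]
    constructor
    · intro hq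
      have hqK := (hKI _).2 hq
      obtain ⟨_, _, hb2, ht2⟩ := bI_tI_spec hqK
      have hbox := hIbox _ hqK
      exact ⟨hbox.1, hbox.2.1, hb2, ht2⟩
    · rintro ⟨h1, h2, h3, h4⟩
      exact (hKI _).1 (hcolint a y h1 h2 h3 h4)
  refine ⟨bI K, tI K, hcond, hIS, ?_⟩
  ext e
  rw [hbd e, hIS, isBd_gbt hcond e]

end BetaAux

namespace BetaAux

open SimpleGraph

theorem mem_gammaN_iff {n m : ℤ} (hn : 1 ≤ n) (hm : 1 ≤ m) {γ : Finset LatticeEdge} :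
    γ ∈ GammaN {0, ((n : ℤ), (m : ℤ))} (2 * (n + m + 2)).toNat ↔
      ∃ b t : ℤ → ℤ, Cond n m b t ∧ γ = gbt n m b t := by
  constructor
  · rintro ⟨⟨⟨hexu, hmin⟩, C, hCfin, hCsub⟩, hcard⟩
    have h0 : ((0 : ℤ), (0 : ℤ)) ∈ C.supp := hCsub (Set.mem_insert _ _)
    have hx : ((n : ℤ), (m : ℤ)) ∈ C.supp := hCsub (Set.mem_insert_of_mem _ rfl)
    have hbd : IsBd γ C.supp := by
      intro e
      constructor
      · intro he
        by_contra hnb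
        refine hmin e he ((graphOf {f | f ∉ γ ∨ f = e}).connectedComponentMk ((0 : ℤ), (0 : ℤ)))
          ?_
        have hmono : complGraph γ ≤ graphOf {f | f ∉ γ ∨ f = e} := by
          rintro u v ⟨hne, e', he', hs⟩
          exact ⟨hne, e', Or.inl he', hs⟩
        have hsupp2 : ((graphOf {f | f ∉ γ ∨ f = e}).connectedComponentMk
            ((0 : ℤ), (0 : ℤ))).supp = C.supp := by
          refine supp_mk_eq h0 ?_ ?_
          · intro u hu
            exact (reachable_of_mem_supp h0 hu).mono hmono
          · intro u w hu hadj
            obtain ⟨hne2, e', he', hs⟩ := hadj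
            rcases he' with h' | rfl
            · exact mem_supp_of_adj hu ⟨hne2, e', h', hs⟩
            · rw [LatticeEdge.ends, Sym2.eq_iff] at hs
              rcases hs with ⟨h1, h2⟩ | ⟨h1, h2⟩
              · by_cases hw : w ∈ C.supp
                · exact hw
                · refine absurd (Or.inl ⟨?_, ?_⟩) hnb
                  · rw [h1]; exact hu
                  · rw [h2]; exact hw
              · by_cases hw : w ∈ C.supp
                · exact hw
                · refine absurd (Or.inr ⟨?_, ?_⟩) hnb
                  · rw [h1]; exact hw
                  · rw [h2]; exact hu
        show (((graphOf {f | f ∉ γ ∨ f = e}).connectedComponentMk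
            ((0 : ℤ), (0 : ℤ))).supp).Finite
        rw [hsupp2]
        exact hCfin
      · intro hBd
        by_contra hne
        rcases hBd with ⟨h1, h2⟩ | ⟨h1, h2⟩
        · exact h2 (mem_supp_of_adj h1 ⟨fun hq => h2 (hq ▸ h1), e, hne, rfl⟩)
        · exact h1 (mem_supp_of_adj h2
            ⟨fun hq => h1 (hq ▸ h2), e, hne, (Sym2.eq_swap : s(e.fst, e.snd) = _)⟩)
    obtain ⟨b, t, hcond, _, hγ⟩ := struct_main hn hm hCfin hbd
      (fun u v hu hv => reachable_of_mem_supp hu hv)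
      (fun u w hu h => mem_supp_of_adj hu h) h0 hx hcard
    exact ⟨b, t, hcond, hγ⟩
  · rintro ⟨b, t, hcond, rfl⟩
    exact gbt_mem_gammaN hcond

end BetaAux

namespace BetaAux

open SimpleGraph

noncomputable def colSetOf (γ : Finset LatticeEdge) (i : ℤ) : Finset ℤ :=
  (γ.filter fun e => e.horiz = false ∧ e.base.1 = i).image fun e => e.base.2

noncomputable def bOf (γ : Finset LatticeEdge) (i : ℤ) : ℤ :=
  if h : (colSetOf γ i).Nonempty then (colSetOf γ i).min' h + 1 else 0

noncomputable def tOf (γ : Finset LatticeEdge) (i : ℤ) : ℤ :=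
  if h : (colSetOf γ i).Nonempty then (colSetOf γ i).max' h else 0

lemma mem_colSetOf {γ : Finset LatticeEdge} {i y : ℤ} :
    y ∈ colSetOf γ i ↔ colE i y ∈ γ := by
  classical
  rw [colSetOf, Finset.mem_image]
  constructor
  · rintro ⟨⟨⟨a, r⟩, hor⟩, he, rfl⟩
    rw [Finset.mem_filter] at he
    obtain ⟨h1, h2, h3⟩ := he
    have h2' : hor = false := h2
    have h3' : a = i := h3
    subst h2'
    subst h3'
    exact h1
  · intro h
    exact ⟨colE i y, Finset.mem_filter.2 ⟨h, rfl, rfl⟩, rfl⟩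

section Canon

variable {n m : ℤ} {b t : ℤ → ℤ} (hc : Cond n m b t)
include hc

lemma colSetOf_gbt {i : ℤ} (h1 : 0 ≤ i) (h2 : i ≤ n) :
    colSetOf (gbt n m b t) i = {b i - 1, t i} := by
  classical
  ext y
  rw [mem_colSetOf]
  constructor
  · intro h
    have hv : colE i y ∈ (gbt n m b t).filter (fun e => e.horiz = false) :=
      Finset.mem_filter.2 ⟨h, rfl⟩
    rw [gbt_vert hc] at hv
    rcases Finset.mem_union.1 hv with hv | hv <;>
      obtain ⟨j, hj, hje⟩ := Finset.mem_image.1 hv <;>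
      simp only [colE, LatticeEdge.mk.injEq, Prod.mk.injEq, and_true] at hje <;>
      obtain ⟨rfl, rfl⟩ := hje
    · exact Finset.mem_insert.2 (Or.inl rfl)
    · exact Finset.mem_insert.2 (Or.inr (Finset.mem_singleton.2 rfl))
  · intro h
    rcases Finset.mem_insert.1 h with rfl | h
    · have hmem : colE i (b i - 1) ∈ (gbt n m b t).filter (fun e => e.horiz = false) := by
        rw [gbt_vert hc]
        exact Finset.mem_union_left _ (Finset.mem_image.2 ⟨i, Finset.mem_Icc.2 ⟨h1, h2⟩, rfl⟩)
      exact (Finset.mem_filter.1 hmem).1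
    · rw [Finset.mem_singleton] at h
      subst h
      have hmem : colE i (t i) ∈ (gbt n m b t).filter (fun e => e.horiz = false) := by
        rw [gbt_vert hc]
        exact Finset.mem_union_right _ (Finset.mem_image.2 ⟨i, Finset.mem_Icc.2 ⟨h1, h2⟩, rfl⟩)
      exact (Finset.mem_filter.1 hmem).1

lemma bOf_gbt {i : ℤ} (h1 : 0 ≤ i) (h2 : i ≤ n) : bOf (gbt n m b t) i = b i := by
  classical
  have hcs := colSetOf_gbt hc h1 h2
  have hne : (colSetOf (gbt n m b t) i).Nonempty := by
    rw [hcs]; exact ⟨b i - 1, Finset.mem_insert_self _ _⟩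
  rw [bOf, dif_pos hne]
  have hbt := hc.hbt h1 h2
  have hmin : (colSetOf (gbt n m b t) i).min' hne = b i - 1 := by
    apply le_antisymm
    · exact Finset.min'_le _ _ (by rw [hcs]; exact Finset.mem_insert_self _ _)
    · refine Finset.le_min' _ _ _ ?_
      intro z hz
      rw [hcs] at hz
      rcases Finset.mem_insert.1 hz with rfl | hz
      · exact le_rfl
      · rw [Finset.mem_singleton] at hz
        omega
  omega

lemma tOf_gbt {i : ℤ} (h1 : 0 ≤ i) (h2 : i ≤ n) : tOf (gbt n m b t) i = t i := by
  classical
  have hcs := colSetOf_gbt hc h1 h2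
  have hne : (colSetOf (gbt n m b t) i).Nonempty := by
    rw [hcs]; exact ⟨b i - 1, Finset.mem_insert_self _ _⟩
  rw [tOf, dif_pos hne]
  have hbt := hc.hbt h1 h2
  apply le_antisymm
  · refine Finset.max'_le _ _ _ ?_
    intro z hz
    rw [hcs] at hz
    rcases Finset.mem_insert.1 hz with rfl | hz
    · omega
    · rw [Finset.mem_singleton] at hz
      omega
  · refine Finset.le_max' _ _ ?_
    rw [hcs]
    exact Finset.mem_insert.2 (Or.inr (Finset.mem_singleton.2 rfl))

end Canon

section Congr

variable {n m : ℤ} {b t b' t' : ℤ → ℤ}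
  (hb : ∀ i, 0 ≤ i → i ≤ n → b i = b' i) (ht : ∀ i, 0 ≤ i → i ≤ n → t i = t' i)
include hb ht

lemma Sbt_congr : Sbt n b t = Sbt n b' t' := by
  ext q
  obtain ⟨a, r⟩ := q
  rw [mem_Sbt, mem_Sbt]
  constructor <;> rintro ⟨h1, h2, h3, h4⟩ <;> refine ⟨h1, h2, ?_, ?_⟩
  · rw [← hb a h1 h2]; exact h3
  · rw [← ht a h1 h2]; exact h4
  · rw [hb a h1 h2]; exact h3
  · rw [ht a h1 h2]; exact h4

lemma gbt_congr : gbt n m b t = gbt n m b' t' := by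
  rw [gbt, gbt, Sbt_congr hb ht]

lemma Cond_congr (hc : Cond n m b t) (hm : 1 ≤ m) : Cond n m b' t' := by
  have hn := hc.hn
  refine ⟨hc.hn, hc.hm, ?_, ?_, ?_, ?_, ?_, ?_⟩
  · intro i j h1 h2 h3
    rw [← hb i h1 (by omega), ← hb j (by omega) h3]
    exact hc.monoB h1 h2 h3
  · intro i j h1 h2 h3
    rw [← ht i h1 (by omega), ← ht j (by omega) h3]
    exact hc.monoT h1 h2 h3
  · rw [← hb 0 le_rfl (by omega)]; exact hc.b0
  · rw [← ht n (by omega) le_rfl]; exact hc.tn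
  · intro i h1 h2
    rw [← hb i h1 h2, ← ht i h1 h2]
    exact hc.hbt h1 h2
  · intro i h1 h2
    rw [← hb (i + 1) (by omega) (by omega), ← ht i h1 (by omega)]
    exact hc.cross h1 h2

end Congr

theorem canon {n m : ℤ} (hn : 1 ≤ n) (hm : 1 ≤ m) {γ : Finset LatticeEdge}
    (h : γ ∈ GammaN {0, ((n : ℤ), (m : ℤ))} (2 * (n + m + 2)).toNat) :
    Cond n m (bOf γ) (tOf γ) ∧ γ = gbt n m (bOf γ) (tOf γ) := by
  obtain ⟨b, t, hc, rfl⟩ := (mem_gammaN_iff hn hm).1 h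
  have hb : ∀ i, 0 ≤ i → i ≤ n → b i = bOf (gbt n m b t) i :=
    fun i h1 h2 => (bOf_gbt hc h1 h2).symm
  have ht : ∀ i, 0 ≤ i → i ≤ n → t i = tOf (gbt n m b t) i :=
    fun i h1 h2 => (tOf_gbt hc h1 h2).symm
  exact ⟨Cond_congr hb ht hc hm, gbt_congr hb ht⟩

/-- a strictly increasing function on `[0,n]` is determined by its image -/
theorem strict_image_eq {f g : ℤ → ℤ} {n : ℤ} (hn : 0 ≤ n)
    (hf : ∀ ⦃i j⦄, 0 ≤ i → i < j → j ≤ n → f i < f j)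
    (hg : ∀ ⦃i j⦄, 0 ≤ i → i < j → j ≤ n → g i < g j)
    (himg : (Finset.Icc 0 n).image f = (Finset.Icc 0 n).image g) :
    ∀ i, 0 ≤ i → i ≤ n → f i = g i := by
  classical
  have hrank : ∀ (h : ℤ → ℤ), (∀ ⦃i j⦄, 0 ≤ i → i < j → j ≤ n → h i < h j) →
      ∀ i, 0 ≤ i → i ≤ n →
      ((Finset.Icc 0 n).image h).filter (fun y => y ≤ h i) = (Finset.Icc 0 i).image h := by
    intro h hmono i h1 h2
    ext y
    rw [Finset.mem_filter, Finset.mem_image, Finset.mem_image]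
    constructor
    · rintro ⟨⟨j, hj, rfl⟩, hle⟩
      rw [Finset.mem_Icc] at hj
      refine ⟨j, Finset.mem_Icc.2 ⟨hj.1, ?_⟩, rfl⟩
      by_contra hcon
      push_neg at hcon
      exact absurd hle (not_le.2 (hmono h1 hcon hj.2))
    · rintro ⟨j, hj, rfl⟩
      rw [Finset.mem_Icc] at hj
      refine ⟨⟨j, Finset.mem_Icc.2 ⟨hj.1, by omega⟩, rfl⟩, ?_⟩
      rcases eq_or_lt_of_le hj.2 with rfl | hlt
      · exact le_rfl
      · exact (hmono hj.1 hlt h2).le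
  have hcardim : ∀ (h : ℤ → ℤ), (∀ ⦃i j⦄, 0 ≤ i → i < j → j ≤ n → h i < h j) →
      ∀ i, 0 ≤ i → i ≤ n → ((Finset.Icc 0 i).image h).card = (i + 1).toNat := by
    intro h hmono i h1 h2
    rw [Finset.card_image_of_injOn, Int.card_Icc]
    · norm_num
    · intro a ha c hcc hac
      rw [Finset.coe_Icc, Set.mem_Icc] at ha hcc
      by_contra hne2
      rcases lt_or_gt_of_ne hne2 with hlt | hlt
      · exact absurd hac (ne_of_lt (hmono ha.1 hlt (le_trans hcc.2 h2)))
      · exact absurd hac.symm (ne_of_lt (hmono hcc.1 hlt (le_trans ha.2 h2)))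
  intro i h1 h2
  by_contra hne
  have key : ∀ (f' g' : ℤ → ℤ), (∀ ⦃i j⦄, 0 ≤ i → i < j → j ≤ n → f' i < f' j) →
      (∀ ⦃i j⦄, 0 ≤ i → i < j → j ≤ n → g' i < g' j) →
      (Finset.Icc 0 n).image f' = (Finset.Icc 0 n).image g' → f' i < g' i → False := by
    intro f' g' hf' hg' himg' hlt
    have e1 := hrank f' hf' i h1 h2
    have e2 := hrank g' hg' i h1 h2
    rw [himg'] at e1
    have hss : ((Finset.Icc 0 n).image g').filter (fun y => y ≤ f' i) ⊂
        ((Finset.Icc 0 n).image g').filter (fun y => y ≤ g' i) := by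
      refine ⟨fun x hx => Finset.mem_filter.2 ⟨(Finset.mem_filter.1 hx).1,
          le_trans (Finset.mem_filter.1 hx).2 hlt.le⟩, ?_⟩
      intro hsub
      have hgi : g' i ∈ ((Finset.Icc 0 n).image g').filter (fun y => y ≤ g' i) :=
        Finset.mem_filter.2 ⟨Finset.mem_image.2 ⟨i, Finset.mem_Icc.2 ⟨h1, h2⟩, rfl⟩, le_rfl⟩
      have := (Finset.mem_filter.1 (hsub hgi)).2
      omega
    have hclt := Finset.card_lt_card hss
    rw [e1, e2, hcardim f' hf' i h1 h2, hcardim g' hg' i h1 h2] at hclt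
    omega
  rcases lt_or_gt_of_ne hne with hlt | hlt
  · exact key f g hf hg himg hlt
  · exact key g f hg hf himg.symm hlt

end BetaAux

namespace BetaAux

open SimpleGraph

theorem gammaN_finite_and_upper {n m : ℤ} (hn : 1 ≤ n) (hm : 1 ≤ m) :
    (GammaN {0, ((n : ℤ), (m : ℤ))} (2 * (n + m + 2)).toNat).Finite ∧
    Nat.card ↥(GammaN {0, ((n : ℤ), (m : ℤ))} (2 * (n + m + 2)).toNat) ≤
      2 ^ (n + m + 1).toNat * 2 ^ (n + m + 1).toNat := by
  classical
  set P := (Finset.Icc (0 : ℤ) (n + m)).powerset with hP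
  set Φ : Finset LatticeEdge → Finset ℤ × Finset ℤ := fun γ =>
    ((Finset.Icc 0 n).image fun i => i + bOf γ i,
     (Finset.Icc 0 n).image fun i => i + tOf γ i) with hΦ
  have hmaps : ∀ γ ∈ GammaN {0, ((n : ℤ), (m : ℤ))} (2 * (n + m + 2)).toNat,
      Φ γ ∈ (P ×ˢ P : Finset _) := by
    intro γ hγ
    obtain ⟨hc, -⟩ := canon hn hm hγ
    rw [Finset.mem_product]
    constructor
    · rw [hP, Finset.mem_powerset]
      intro y hy
      obtain ⟨i, hi, rfl⟩ := Finset.mem_image.1 hy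
      rw [Finset.mem_Icc] at hi
      rw [Finset.mem_Icc]
      have u1 := hc.b_nonneg hi.1 hi.2
      have u2 := hc.b_le_m hi.1 hi.2
      omega
    · rw [hP, Finset.mem_powerset]
      intro y hy
      obtain ⟨i, hi, rfl⟩ := Finset.mem_image.1 hy
      rw [Finset.mem_Icc] at hi
      rw [Finset.mem_Icc]
      have u1 := hc.t_nonneg hi.1 hi.2
      have u2 := hc.t_le_m hi.1 hi.2
      omega
  have hinj : Set.InjOn Φ (GammaN {0, ((n : ℤ), (m : ℤ))} (2 * (n + m + 2)).toNat) := by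
    intro γ1 h1 γ2 h2 he
    obtain ⟨hc1, hg1⟩ := canon hn hm h1
    obtain ⟨hc2, hg2⟩ := canon hn hm h2
    have e1 : (Finset.Icc (0 : ℤ) n).image (fun i => i + bOf γ1 i) =
        (Finset.Icc (0 : ℤ) n).image (fun i => i + bOf γ2 i) := congrArg Prod.fst he
    have e2 : (Finset.Icc (0 : ℤ) n).image (fun i => i + tOf γ1 i) =
        (Finset.Icc (0 : ℤ) n).image (fun i => i + tOf γ2 i) := congrArg Prod.snd he
    have hb : ∀ i, 0 ≤ i → i ≤ n → i + bOf γ1 i = i + bOf γ2 i := by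
      refine strict_image_eq (by omega) ?_ ?_ e1
      · intro i j hi hij hj
        have := hc1.monoB hi (le_of_lt hij) hj
        omega
      · intro i j hi hij hj
        have := hc2.monoB hi (le_of_lt hij) hj
        omega
    have ht : ∀ i, 0 ≤ i → i ≤ n → i + tOf γ1 i = i + tOf γ2 i := by
      refine strict_image_eq (by omega) ?_ ?_ e2
      · intro i j hi hij hj
        have := hc1.monoT hi (le_of_lt hij) hj
        omega
      · intro i j hi hij hj
        have := hc2.monoT hi (le_of_lt hij) hj
        omega
    rw [hg1, hg2]
    refine gbt_congr (fun i u1 u2 => ?_) (fun i u1 u2 => ?_)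
    · have := hb i u1 u2
      omega
    · have := ht i u1 u2
      omega
  constructor
  · have himfin : (Φ '' (GammaN {0, ((n : ℤ), (m : ℤ))} (2 * (n + m + 2)).toNat)).Finite := by
      refine Set.Finite.subset (Finset.finite_toSet (P ×ˢ P)) ?_
      rintro y ⟨γ, hγ, rfl⟩
      exact hmaps γ hγ
    exact Set.Finite.of_finite_image himfin hinj
  · have step1 : Nat.card ↥(GammaN {0, ((n : ℤ), (m : ℤ))} (2 * (n + m + 2)).toNat) =
        (GammaN {0, ((n : ℤ), (m : ℤ))} (2 * (n + m + 2)).toNat).ncard :=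
      Nat.card_coe_set_eq _
    have step2 : (GammaN {0, ((n : ℤ), (m : ℤ))} (2 * (n + m + 2)).toNat).ncard ≤
        ((P ×ˢ P : Finset (Finset ℤ × Finset ℤ)) : Set (Finset ℤ × Finset ℤ)).ncard := by
      refine Set.ncard_le_ncard_of_injOn Φ (fun a ha => hmaps a ha) hinj ?_
      exact Finset.finite_toSet _
    have step3 : ((P ×ˢ P : Finset (Finset ℤ × Finset ℤ)) : Set (Finset ℤ × Finset ℤ)).ncard =
        2 ^ (n + m + 1).toNat * 2 ^ (n + m + 1).toNat := by
      rw [Set.ncard_coe_finset, Finset.card_product, hP, Finset.card_powerset, Int.card_Icc]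
      norm_num
    omega
  
theorem gammaN_nonempty {n m : ℤ} (hn : 1 ≤ n) (hm : 1 ≤ m) :
    (GammaN {0, ((n : ℤ), (m : ℤ))} (2 * (n + m + 2)).toNat).Nonempty := by
  refine ⟨gbt n m (fun _ => 0) (fun _ => m), gbt_mem_gammaN ?_⟩
  exact ⟨hn, hm, fun i j _ _ _ => le_rfl, fun i j _ _ _ => le_rfl, rfl, rfl,
    fun i _ _ => by omega, fun i _ _ => by omega⟩

theorem gbt_inj {n m : ℤ} {b t b' t' : ℤ → ℤ} (hc : Cond n m b t) (hc' : Cond n m b' t')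
    (h : gbt n m b t = gbt n m b' t') :
    ∀ i, 0 ≤ i → i ≤ n → b i = b' i ∧ t i = t' i := by
  intro i h1 h2
  constructor
  · rw [← bOf_gbt hc h1 h2, h, bOf_gbt hc' h1 h2]
  · rw [← tOf_gbt hc h1 h2, h, tOf_gbt hc' h1 h2]

theorem gammaN_supermul {n m n' m' : ℤ} (hn : 1 ≤ n) (hm : 1 ≤ m) (hn' : 1 ≤ n')
    (hm' : 1 ≤ m') :
    Nat.card ↥(GammaN {0, ((n : ℤ), (m : ℤ))} (2 * (n + m + 2)).toNat) *
      Nat.card ↥(GammaN {0, ((n' : ℤ), (m' : ℤ))} (2 * (n' + m' + 2)).toNat) ≤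
    Nat.card ↥(GammaN {0, ((n + n' : ℤ), (m + m' : ℤ))} (2 * ((n + n') + (m + m') + 2)).toNat)
    := by
  classical
  have hfinC := (gammaN_finite_and_upper (show (1 : ℤ) ≤ n + n' by omega)
    (show (1 : ℤ) ≤ m + m' by omega)).1
  haveI : Finite ↥(GammaN {0, ((n + n' : ℤ), (m + m' : ℤ))}
      (2 * ((n + n') + (m + m') + 2)).toNat) := hfinC.to_subtype
  rw [← Nat.card_prod]
  have hcondC : ∀ (γ1 γ2 : Finset LatticeEdge),
      Cond n m (bOf γ1) (tOf γ1) → Cond n' m' (bOf γ2) (tOf γ2) →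
      Cond (n + n') (m + m') (fun i => if i ≤ n then bOf γ1 i else m + bOf γ2 (i - n))
        (fun i => if i < n then tOf γ1 i else m + tOf γ2 (i - n)) := by
    intro γ1 γ2 hc1 hc2
    refine ⟨by omega, by omega, ?_, ?_, ?_, ?_, ?_, ?_⟩
    · -- monoB
      intro i j h1 h2 h3
      by_cases hi : i ≤ n <;> by_cases hj : j ≤ n
      · rw [if_pos hi, if_pos hj]
        exact hc1.monoB h1 h2 hj
      · rw [if_pos hi, if_neg hj]
        have u1 := hc1.monoB h1 hi le_rfl
        have u2 := hc1.b_le_m h1 hi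
        have u3 := hc2.b_nonneg (show (0:ℤ) ≤ j - n by omega) (show j - n ≤ n' by omega)
        omega
      · omega
      · rw [if_neg hi, if_neg hj]
        have := hc2.monoB (show (0:ℤ) ≤ i - n by omega) (show i - n ≤ j - n by omega)
          (show j - n ≤ n' by omega)
        omega
    · -- monoT
      intro i j h1 h2 h3
      by_cases hi : i < n <;> by_cases hj : j < n
      · rw [if_pos hi, if_pos hj]
        exact hc1.monoT h1 h2 (by omega)
      · rw [if_pos hi, if_neg hj]
        have u1 := hc1.monoT h1 (show i ≤ n by omega) le_rfl
        have u2 := hc1.tn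
        have u3 := hc2.t_nonneg (show (0:ℤ) ≤ j - n by omega) (show j - n ≤ n' by omega)
        omega
      · omega
      · rw [if_neg hi, if_neg hj]
        have := hc2.monoT (show (0:ℤ) ≤ i - n by omega) (show i - n ≤ j - n by omega)
          (show j - n ≤ n' by omega)
        omega
    · -- b0
      rw [if_pos (show (0:ℤ) ≤ n by omega)]
      exact hc1.b0
    · -- tn
      rw [if_neg (show ¬ (n + n' < n) by omega)]
      have he : n + n' - n = n' := by ring
      rw [he, hc2.tn]
    · -- hbt
      intro i h1 h2
      by_cases hi : i < n
      · rw [if_pos (show i ≤ n by omega), if_pos hi]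
        exact hc1.hbt h1 (by omega)
      · by_cases hi2 : i ≤ n
        · rw [if_pos hi2, if_neg hi]
          have u1 := hc1.b_le_m h1 hi2
          have u2 := hc2.t_nonneg (show (0:ℤ) ≤ i - n by omega) (show i - n ≤ n' by omega)
          have u3 := hc2.hbt (show (0:ℤ) ≤ i - n by omega) (show i - n ≤ n' by omega)
          have u4 := hc2.b_nonneg (show (0:ℤ) ≤ i - n by omega) (show i - n ≤ n' by omega)
          omega
        · rw [if_neg hi2, if_neg hi]
          have := hc2.hbt (show (0:ℤ) ≤ i - n by omega) (show i - n ≤ n' by omega)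
          omega
    · -- cross
      intro i h1 h2
      by_cases hi : i + 1 ≤ n
      · rw [if_pos hi, if_pos (show i < n by omega)]
        exact hc1.cross h1 (by omega)
      · rw [if_neg hi, if_neg (show ¬ i < n by omega)]
        have hc := hc2.cross (show (0:ℤ) ≤ i - n by omega) (show i - n < n' by omega)
        have he : i + 1 - n = (i - n) + 1 := by ring
        rw [he]
        omega
  set C := GammaN {0, ((n + n' : ℤ), (m + m' : ℤ))} (2 * ((n + n') + (m + m') + 2)).toNat
    with hC
  set Ψ : ↥(GammaN {0, ((n : ℤ), (m : ℤ))} (2 * (n + m + 2)).toNat) ×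
      ↥(GammaN {0, ((n' : ℤ), (m' : ℤ))} (2 * (n' + m' + 2)).toNat) → ↥C := fun q =>
    ⟨gbt (n + n') (m + m') (fun i => if i ≤ n then bOf q.1.1 i else m + bOf q.2.1 (i - n))
      (fun i => if i < n then tOf q.1.1 i else m + tOf q.2.1 (i - n)),
     by
      rw [hC]
      exact gbt_mem_gammaN (hcondC q.1.1 q.2.1 (canon hn hm q.1.2).1 (canon hn' hm' q.2.2).1)⟩
    with hΨ
  refine Nat.card_le_card_of_injective Ψ ?_
  rintro ⟨⟨γ1, hγ1⟩, ⟨γ2, hγ2⟩⟩ ⟨⟨γ1', hγ1'⟩, ⟨γ2', hγ2'⟩⟩ he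
  have hce1 := (canon hn hm hγ1).1
  have hce2 := (canon hn' hm' hγ2).1
  have hce1' := (canon hn hm hγ1').1
  have hce2' := (canon hn' hm' hγ2').1
  have heγ : gbt (n + n') (m + m')
      (fun i => if i ≤ n then bOf γ1 i else m + bOf γ2 (i - n))
      (fun i => if i < n then tOf γ1 i else m + tOf γ2 (i - n)) =
      gbt (n + n') (m + m')
      (fun i => if i ≤ n then bOf γ1' i else m + bOf γ2' (i - n))
      (fun i => if i < n then tOf γ1' i else m + tOf γ2' (i - n)) :=
    congrArg Subtype.val he
  have hpt := gbt_inj (hcondC γ1 γ2 hce1 hce2) (hcondC γ1' γ2' hce1' hce2') heγ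
  have hb1 : ∀ i, 0 ≤ i → i ≤ n → bOf γ1 i = bOf γ1' i := by
    intro i u1 u2
    have := (hpt i u1 (by omega)).1
    rwa [if_pos u2, if_pos u2] at this
  have ht1 : ∀ i, 0 ≤ i → i ≤ n → tOf γ1 i = tOf γ1' i := by
    intro i u1 u2
    by_cases hi : i < n
    · have := (hpt i u1 (by omega)).2
      rwa [if_pos hi, if_pos hi] at this
    · have hin : i = n := by omega
      rw [hin, hce1.tn, hce1'.tn]
  have hb2 : ∀ j, 0 ≤ j → j ≤ n' → bOf γ2 j = bOf γ2' j := by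
    intro j u1 u2
    rcases eq_or_lt_of_le u1 with rfl | hj
    · rw [hce2.b0, hce2'.b0]
    · have := (hpt (n + j) (by omega) (by omega)).1
      rw [if_neg (by omega), if_neg (by omega)] at this
      have he2 : n + j - n = j := by ring
      rw [he2] at this
      omega
  have ht2 : ∀ j, 0 ≤ j → j ≤ n' → tOf γ2 j = tOf γ2' j := by
    intro j u1 u2
    have := (hpt (n + j) (by omega) (by omega)).2
    rw [if_neg (by omega), if_neg (by omega)] at this
    have he2 : n + j - n = j := by ring
    rw [he2] at this
    omega
  have hγ1e : γ1 = γ1' := by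
    rw [(canon hn hm hγ1).2, (canon hn hm hγ1').2]
    exact gbt_congr hb1 ht1
  have hγ2e : γ2 = γ2' := by
    rw [(canon hn' hm' hγ2).2, (canon hn' hm' hγ2').2]
    exact gbt_congr hb2 ht2
  subst hγ1e
  subst hγ2e
  rfl

end BetaAux

namespace BetaAux

noncomputable def Aseq (ρ : ℕ) (k : ℕ) : ℕ := betaX ((k : ℤ), ((ρ * k : ℕ) : ℤ))

lemma Aseq_form (ρ k : ℕ) : Aseq ρ k = Nat.card
    ↥(GammaN {0, ((k : ℤ), ((ρ : ℤ) * (k : ℤ)))}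
      (2 * ((k : ℤ) + (ρ : ℤ) * (k : ℤ) + 2)).toNat) := by
  have hcast : (((ρ * k : ℕ) : ℤ)) = (ρ : ℤ) * (k : ℤ) := by push_cast; ring
  rw [Aseq, hcast]
  rfl

section AseqFacts

variable {ρ k l : ℕ} (hρ : 1 ≤ ρ) (hk : 1 ≤ k)
include hρ hk

lemma cast_bounds : (1 : ℤ) ≤ (k : ℤ) ∧ (1 : ℤ) ≤ (ρ : ℤ) * (k : ℤ) := by
  constructor
  · exact_mod_cast hk
  · have : 1 ≤ ρ * k := Nat.mul_pos (by omega) (by omega)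
    exact_mod_cast this

lemma Aseq_pos : 1 ≤ Aseq ρ k := by
  obtain ⟨h1, h2⟩ := cast_bounds hρ hk
  rw [Aseq_form]
  have hfin := (gammaN_finite_and_upper h1 h2).1
  haveI := hfin.to_subtype
  haveI := (gammaN_nonempty h1 h2).to_subtype
  exact Nat.card_pos

lemma Aseq_upper : Aseq ρ k ≤ 4 ^ ((1 + ρ) * k + 1) := by
  obtain ⟨h1, h2⟩ := cast_bounds hρ hk
  rw [Aseq_form]
  have hup := (gammaN_finite_and_upper h1 h2).2
  have hTeq : ((k : ℤ) + (ρ : ℤ) * (k : ℤ) + 1) = (((1 + ρ) * k + 1 : ℕ) : ℤ) := by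
    push_cast; ring
  rw [hTeq, Int.toNat_natCast] at hup
  have h4 : (2 : ℕ) ^ ((1 + ρ) * k + 1) * 2 ^ ((1 + ρ) * k + 1) = 4 ^ ((1 + ρ) * k + 1) := by
    rw [← mul_pow]
    norm_num
  omega

lemma Aseq_supermul (hl : 1 ≤ l) : Aseq ρ k * Aseq ρ l ≤ Aseq ρ (k + l) := by
  obtain ⟨h1, h2⟩ := cast_bounds hρ hk
  obtain ⟨h3, h4⟩ := cast_bounds hρ hl
  rw [Aseq_form, Aseq_form, Aseq_form]
  have hmain := gammaN_supermul h1 h2 h3 h4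
  have e1 : (((k + l : ℕ) : ℤ)) = (k : ℤ) + (l : ℤ) := by push_cast; ring
  have e2 : (ρ : ℤ) * ((k : ℤ) + (l : ℤ)) = (ρ : ℤ) * (k : ℤ) + (ρ : ℤ) * (l : ℤ) := by ring
  rw [e1, e2]
  exact hmain

end AseqFacts

end BetaAux
/-- For a fixed positive integer `ρ`, with `α_n = β_{(n, ρn)}`,
the limit `α = lim_{n→∞} α_n^{1/n}` exists and `1 ≤ α ≤ 4^{1+ρ}`. -/
theorem betaX_root_tendsto (ρ : ℕ) (hρ : 1 ≤ ρ) :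
    ∃ α : ℝ, 1 ≤ α ∧ α ≤ 4 ^ (1 + ρ) ∧
      Filter.Tendsto (fun n : ℕ => (betaX ((n : ℤ), ((ρ * n : ℕ) : ℤ)) : ℝ) ^ (1 / (n : ℝ)))
        Filter.atTop (nhds α) := by
  classical
  set A : ℕ → ℕ := BetaAux.Aseq ρ with hA
  have hA1 : ∀ k, 1 ≤ k → 1 ≤ A k := fun k hk => BetaAux.Aseq_pos hρ hk
  have hApos : ∀ k, 1 ≤ k → (0 : ℝ) < (A k : ℝ) := by
    intro k hk
    have := hA1 k hk
    exact_mod_cast Nat.lt_of_lt_of_le Nat.zero_lt_one this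
  set u : ℕ → ℝ := fun k => if k = 0 then 0 else -Real.log (A k) with hu
  have hu0 : u 0 = 0 := if_pos rfl
  have huk : ∀ k, 1 ≤ k → u k = -Real.log (A k) := fun k hk => if_neg (by omega)
  have hsub : Subadditive u := by
    intro j l
    rcases Nat.eq_zero_or_pos j with rfl | hj
    · rw [Nat.zero_add, hu0, zero_add]
    rcases Nat.eq_zero_or_pos l with rfl | hl
    · rw [Nat.add_zero, hu0, add_zero]
    rw [huk j hj, huk l hl, huk (j + l) (by omega)]
    have hsm : (A j : ℝ) * (A l : ℝ) ≤ (A (j + l) : ℝ) := by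
      exact_mod_cast BetaAux.Aseq_supermul hρ hj hl
    have hpj := hApos j hj
    have hpl := hApos l hl
    have hlog := Real.log_le_log (mul_pos hpj hpl) hsm
    rw [Real.log_mul (ne_of_gt hpj) (ne_of_gt hpl)] at hlog
    linarith
  have hlogup : ∀ k, 1 ≤ k →
      Real.log (A k) ≤ (((1 + ρ) * k + 1 : ℕ) : ℝ) * Real.log 4 := by
    intro k hk
    calc Real.log (A k) ≤ Real.log ((4 : ℝ) ^ ((1 + ρ) * k + 1)) := by
          refine Real.log_le_log (hApos k hk) ?_
          exact_mod_cast BetaAux.Aseq_upper hρ hk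
      _ = (((1 + ρ) * k + 1 : ℕ) : ℝ) * Real.log 4 := Real.log_pow _ _
  have hlog4 : (0 : ℝ) ≤ Real.log 4 := Real.log_nonneg (by norm_num)
  have hbdd : BddBelow (Set.range fun k : ℕ => u k / k) := by
    refine ⟨-(((2 + ρ : ℕ) : ℝ) * Real.log 4), ?_⟩
    rintro x ⟨k, rfl⟩
    rcases Nat.eq_zero_or_pos k with rfl | hk
    · simp only [hu0, Nat.cast_zero, div_zero]
      have : (0 : ℝ) ≤ ((2 + ρ : ℕ) : ℝ) * Real.log 4 := by positivity
      linarith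
    · have hkR : (0 : ℝ) < (k : ℝ) := by exact_mod_cast hk
      show -(((2 + ρ : ℕ) : ℝ) * Real.log 4) ≤ u k / (k : ℝ)
      rw [huk k hk, le_div_iff₀ hkR]
      have h1 := hlogup k hk
      have h2 : (((1 + ρ) * k + 1 : ℕ) : ℝ) ≤ ((2 + ρ : ℕ) : ℝ) * k := by
        push_cast
        have hk1 : (1 : ℝ) ≤ (k : ℝ) := by exact_mod_cast hk
        nlinarith
      nlinarith [mul_le_mul_of_nonneg_right h2 hlog4]
  have htend := hsub.tendsto_lim hbdd
  have hL1 : hsub.lim ≤ 0 := by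
    have hle := hsub.lim_le_div hbdd (n := 1) one_ne_zero
    rw [huk 1 le_rfl] at hle
    have hlog1 : 0 ≤ Real.log (A 1) := Real.log_nonneg (by exact_mod_cast hA1 1 le_rfl)
    simp only [Nat.cast_one, div_one] at hle
    linarith
  have hL2 : -(((1 + ρ : ℕ) : ℝ) * Real.log 4) ≤ hsub.lim := by
    have hctend : Filter.Tendsto (fun k : ℕ => -((((1 + ρ : ℕ)) : ℝ) + 1 / k) * Real.log 4)
        Filter.atTop (nhds (-(((1 + ρ : ℕ) : ℝ)) * Real.log 4)) := by
      have h1 : Filter.Tendsto (fun k : ℕ => (((1 + ρ : ℕ)) : ℝ) + 1 / k) Filter.atTop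
          (nhds ((((1 + ρ : ℕ)) : ℝ) + 0)) :=
        tendsto_one_div_atTop_nhds_zero_nat.const_add _
      have h2 := (h1.neg).mul_const (Real.log 4)
      rw [add_zero] at h2
      exact h2
    have hcomp : ∀ k : ℕ, -((((1 + ρ : ℕ)) : ℝ) + 1 / k) * Real.log 4 ≤ u k / k := by
      intro k
      rcases Nat.eq_zero_or_pos k with rfl | hk
      · have hnn : (0 : ℝ) ≤ (((1 + ρ : ℕ)) : ℝ) * Real.log 4 := by positivity
        simp only [hu0, Nat.cast_zero, div_zero, one_div, inv_zero, add_zero]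
        linarith
      · have hkR : (0 : ℝ) < (k : ℝ) := by exact_mod_cast hk
        rw [huk k hk, le_div_iff₀ hkR]
        have h1 := hlogup k hk
        have heq : (((((1 + ρ : ℕ)) : ℝ) + 1 / k) * Real.log 4) * k =
            (((1 + ρ) * k + 1 : ℕ) : ℝ) * Real.log 4 := by
          push_cast
          field_simp
          try ring
        nlinarith
    have := le_of_tendsto_of_tendsto' hctend htend hcomp
    linarith
  refine ⟨Real.exp (-hsub.lim), ?_, ?_, ?_⟩
  · rw [← Real.exp_zero]
    exact Real.exp_le_exp.2 (by linarith)
  · have hle : Real.exp (-hsub.lim) ≤ Real.exp ((((1 + ρ : ℕ)) : ℝ) * Real.log 4) :=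
      Real.exp_le_exp.2 (by linarith)
    rwa [Real.exp_nat_mul, Real.exp_log (by norm_num : (0 : ℝ) < 4)] at hle
  · have hexp : Filter.Tendsto (fun k : ℕ => Real.exp (-(u k / k))) Filter.atTop
        (nhds (Real.exp (-hsub.lim))) :=
      (Real.continuous_exp.tendsto _).comp htend.neg
    have hev : (fun k : ℕ => Real.exp (-(u k / k))) =ᶠ[Filter.atTop]
        (fun k : ℕ => (A k : ℝ) ^ (1 / (k : ℝ))) := by
      filter_upwards [Filter.eventually_ge_atTop 1] with k hk
      rw [huk k hk, Real.rpow_def_of_pos (hApos k hk), mul_one_div, neg_div, neg_neg]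
    exact hexp.congr' hev
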